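/- arXiv:2206.15201 — 3 statements merged into one kernel-verified Lean document; each statement's English description precedes it below -/
import Mathlib

section
/- Consider a prediction mandatory free instance with unique T_L = T_U, its vertex cover instance Ḡ, a minimum vertex cover VC of Ḡ, and a maximum matching h assigning to each e ∈ VC a distinct partner h(e) ∉ VC. Let l'_1,…,l'_k be the edges of VC ∩ T_L ordered by non-increasing upper limit, and let d be such that the true value of each l'_i with i < d is minimal in the cut X_{l'_i}; then {l'_i, h(l'_i)} is a witness set for each i ≤ d. Symmetrically, let f'_1,…,f'_g be the edges of VC ∖ T_L ordered by non-decreasing lower limit, and let b be such that the true value of each f'_i with i < b is maximal on the cycle C_{f'_i}; then {f'_i, h(f'_i)} is a witness set for each i ≤ b. -/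
/-!
Common framework: the minimum spanning tree problem under explorable
uncertainty with (untrusted) predictions.
-/

open scoped BigOperators
open scoped Classical

noncomputable section

/-- An instance of the MST problem under explorable uncertainty with predictions:
a connected (multi)graph whose edges carry uncertainty intervals (open `(L,U)` for
non-trivial edges, i.e. `L < U`, and the singleton `{L}` for trivial edges, i.e. `L = U`)
together with predicted values `pw e` lying in the intervals. -/
structure UncGraph where
  V : Type
  E : Type
  fintV : Fintype V
  fintE : Fintype E
  decV : DecidableEq V
  decE : DecidableEq E
  ends : E → Sym2 V
  conn : ∀ u v : V, Relation.ReflTransGen (fun a b => ∃ e : E, ends e = s(a, b)) u v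
  L : E → ℝ
  U : E → ℝ
  LU : ∀ e, L e ≤ U e
  pw : E → ℝ
  pw_mem : ∀ e, (L e = U e ∧ pw e = L e) ∨ (L e < pw e ∧ pw e < U e)

attribute [instance] UncGraph.fintV UncGraph.fintE UncGraph.decV UncGraph.decE

namespace UncGraph

variable (G : UncGraph)

/-- The uncertainty interval of an edge: the open interval `(L e, U e)` for a
non-trivial edge, the singleton `{L e}` for a trivial edge (`L e = U e`). -/
def I (e : G.E) : Set ℝ :=
  {x | (G.L e = G.U e ∧ x = G.L e) ∨ (G.L e < x ∧ x < G.U e)}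

/-- A trivial edge: its interval is a singleton. -/
def TrivialEdge (e : G.E) : Prop := G.L e = G.U e

/-- A non-trivial edge: its interval is a nonempty open interval. -/
def NontrivialEdge (e : G.E) : Prop := G.L e < G.U e

/-- `w` is a valid realization of true edge weights. -/
def Valid (w : G.E → ℝ) : Prop := ∀ e, w e ∈ G.I e

/-- Connectivity of two vertices using only edges from `S`. -/
def ConnectsVia (S : Finset G.E) (u v : G.V) : Prop :=
  Relation.ReflTransGen (fun a b => ∃ e ∈ S, G.ends e = s(a, b)) u v

/-- `S` is a spanning tree: it connects all vertices and has `|V| - 1` edges. -/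
def IsSpanningTree (S : Finset G.E) : Prop :=
  (∀ u v : G.V, G.ConnectsVia S u v) ∧ S.card + 1 = Fintype.card G.V

/-- `T` is a minimum spanning tree with respect to the weight function `wf`. -/
def IsMST (wf : G.E → ℝ) (T : Finset G.E) : Prop :=
  G.IsSpanningTree T ∧ ∀ T', G.IsSpanningTree T' → ∑ e ∈ T, wf e ≤ ∑ e ∈ T', wf e

/-- `wf` agrees with the true values `w` on the queried set `Q` and lies in the
uncertainty intervals elsewhere. -/
def Compatible (w : G.E → ℝ) (Q : Finset G.E) (wf : G.E → ℝ) : Prop :=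
  (∀ e ∈ Q, wf e = w e) ∧ ∀ e, wf e ∈ G.I e

/-- The query set `Q` verifies `T`: `T` is an MST for every weight function
compatible with the revealed values. -/
def Verifies (w : G.E → ℝ) (Q T : Finset G.E) : Prop :=
  ∀ wf, G.Compatible w Q wf → G.IsMST wf T

/-- `Q` is a feasible query set for true values `w`. -/
def Feasible (w : G.E → ℝ) (Q : Finset G.E) : Prop :=
  ∃ T, G.Verifies w Q T

/-- The minimum cardinality of a feasible query set. -/
def optCost (w : G.E → ℝ) : ℕ :=
  sInf {n | ∃ Q, G.Feasible w Q ∧ Q.card = n}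

/-- `Q` is an optimal (minimum-cardinality feasible) query set. -/
def IsOptimal (w : G.E → ℝ) (Q : Finset G.E) : Prop :=
  G.Feasible w Q ∧ ∀ Q', G.Feasible w Q' → Q.card ≤ Q'.card

/-- An edge is mandatory if it belongs to every feasible query set. -/
def Mandatory (w : G.E → ℝ) (e : G.E) : Prop :=
  ∀ Q, G.Feasible w Q → e ∈ Q

/-- A witness set intersects every feasible query set. -/
def IsWitnessSet (w : G.E → ℝ) (W : Finset G.E) : Prop :=
  ∀ Q, G.Feasible w Q → ∃ e ∈ W, e ∈ Q

/-- An edge is prediction mandatory if it is mandatory under the assumption that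
all queries return the predicted values. -/
def PredMandatory (e : G.E) : Prop := G.Mandatory G.pw e

/-- An instance is prediction mandatory free if it has no prediction mandatory edge. -/
def PredMandatoryFree : Prop := ∀ e, ¬ G.PredMandatory e

/-- Hop-distance indicator `k_{e'}(e)`: `0` if the prediction `p e` has the same
relation to the interval `I e'` as the true value `w e` (both `≤ L e'`, both
`≥ U e'`, or both strictly inside), and `1` otherwise. -/
def kErr (p w : G.E → ℝ) (e e' : G.E) : ℕ :=
  if (p e ≤ G.L e' ∧ w e ≤ G.L e') ∨ (G.U e' ≤ p e ∧ G.U e' ≤ w e) ∨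
      (G.L e' < p e ∧ p e < G.U e' ∧ G.L e' < w e ∧ w e < G.U e')
  then 0 else 1

/-- `h→(e) = Σ_{e' ≠ e} k_{e'}(e)`. -/
def hright (p w : G.E → ℝ) (e : G.E) : ℕ :=
  ∑ e' ∈ Finset.univ.erase e, G.kErr p w e e'

/-- `h←(e) = Σ_{e' ≠ e} k_e(e')`. -/
def hleft (p w : G.E → ℝ) (e : G.E) : ℕ :=
  ∑ e' ∈ Finset.univ.erase e, G.kErr p w e' e

/-- `h→(E') = Σ_{e ∈ E'} h→(e)`. -/
def hrightSum (p w : G.E → ℝ) (S : Finset G.E) : ℕ := ∑ e ∈ S, G.hright p w e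

/-- `h←(E') = Σ_{e ∈ E'} h←(e)`. -/
def hleftSum (p w : G.E → ℝ) (S : Finset G.E) : ℕ := ∑ e ∈ S, G.hleft p w e

/-- The hop distance of prediction `p` for realization `w`. -/
def hopDist (p w : G.E → ℝ) : ℕ := ∑ e, G.hright p w e

/-- The hop distance `k_h` of the instance's predictions for realization `w`. -/
def khop (w : G.E → ℝ) : ℕ := G.hopDist G.pw w

/-- Lower-limit weights `w^L`: `L e + ε` for non-trivial edges, the known value
for trivial edges. -/
def lowerWeight (ε : ℝ) (e : G.E) : ℝ := if G.L e = G.U e then G.L e else G.L e + ε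

/-- Upper-limit weights `w^U`: `U e - ε` for non-trivial edges, the known value
for trivial edges. -/
def upperWeight (ε : ℝ) (e : G.E) : ℝ := if G.L e = G.U e then G.L e else G.U e - ε

/-- `T` is a lower limit tree: an MST for `w^L` for all sufficiently small `ε > 0`. -/
def IsLowerLimitTree (T : Finset G.E) : Prop :=
  ∃ ε₀ > (0 : ℝ), ∀ ε : ℝ, 0 < ε → ε < ε₀ → G.IsMST (G.lowerWeight ε) T

/-- `T` is an upper limit tree: an MST for `w^U` for all sufficiently small `ε > 0`. -/
def IsUpperLimitTree (T : Finset G.E) : Prop :=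
  ∃ ε₀ > (0 : ℝ), ∀ ε : ℝ, 0 < ε → ε < ε₀ → G.IsMST (G.upperWeight ε) T

/-- `T` is simultaneously the unique lower limit tree and the unique upper
limit tree (`T_L = T_U`, both unique). -/
def UniqueLimitTrees (T : Finset G.E) : Prop :=
  G.IsLowerLimitTree T ∧ G.IsUpperLimitTree T ∧
  (∀ T', G.IsLowerLimitTree T' → T' = T) ∧
  (∀ T', G.IsUpperLimitTree T' → T' = T)

/-- Number of edge-ends of `S` incident to `v` (loops count twice). -/
def incCount (S : Finset G.E) (v : G.V) : ℕ :=
  ∑ e ∈ S, (if G.ends e = s(v, v) then 2 else if v ∈ G.ends e then 1 else 0)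

/-- `S` forms a single cycle: nonempty, every vertex has degree `0` or `2`,
and the support is connected. -/
def IsCycle (S : Finset G.E) : Prop :=
  S.Nonempty ∧ (∀ v, G.incCount S v = 0 ∨ G.incCount S v = 2) ∧
  ∀ u v, G.incCount S u ≠ 0 → G.incCount S v ≠ 0 → G.ConnectsVia S u v

/-- `C` is the cycle closed by adding the edge `f` to the tree `T`. -/
def IsCycleOf (T : Finset G.E) (f : G.E) (C : Finset G.E) : Prop :=
  G.IsCycle C ∧ f ∈ C ∧ C ⊆ insert f T

/-- `e'` lies in the cut `X_e` between the two components of `T \ {e}`. -/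
def InCut (T : Finset G.E) (e e' : G.E) : Prop :=
  ∀ u v : G.V, G.ends e' = s(u, v) → ¬ G.ConnectsVia (T.erase e) u v

/-- `S` is a path between the (distinct) vertices `a` and `b`. -/
def IsPathBetween (S : Finset G.E) (a b : G.V) : Prop :=
  a ≠ b ∧ G.incCount S a = 1 ∧ G.incCount S b = 1 ∧
  (∀ v, v ≠ a → v ≠ b → G.incCount S v = 0 ∨ G.incCount S v = 2) ∧
  ∀ v, G.incCount S v ≠ 0 → G.ConnectsVia S a v

/-- `{f, l}` is an edge of the vertex cover instance `Ḡ` (w.r.t. the tree `T`):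
`f ∉ T`, `l ≠ f` lies on the cycle closed by `f`, both are non-trivial, and
their intervals intersect. -/
def VCEdge (T : Finset G.E) (f l : G.E) : Prop :=
  f ∉ T ∧ l ≠ f ∧ G.NontrivialEdge f ∧ G.NontrivialEdge l ∧
  (∃ C, G.IsCycleOf T f C ∧ l ∈ C) ∧ (G.I f ∩ G.I l).Nonempty

/-- Adjacency in the vertex cover instance `Ḡ` (symmetrized). -/
def VCAdj (T : Finset G.E) (a b : G.E) : Prop := G.VCEdge T a b ∨ G.VCEdge T b a

/-- `S` is a vertex cover of the vertex cover instance `Ḡ`. -/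
def IsVCCover (T S : Finset G.E) : Prop :=
  ∀ a b, G.VCAdj T a b → a ∈ S ∨ b ∈ S

/-- `S` is a minimum vertex cover of the vertex cover instance `Ḡ`. -/
def IsMinVC (T S : Finset G.E) : Prop :=
  G.IsVCCover T S ∧ ∀ S', G.IsVCCover T S' → S.card ≤ S'.card

/-- Edge `e` does not occur in the instance anymore: independently of the
remaining uncertainty it can be deleted (some MST avoids it, for every
realization) or contracted (some MST contains it, for every realization). -/
def Removable (e : G.E) : Prop :=
  (∀ wf : G.E → ℝ, (∀ e', wf e' ∈ G.I e') → ∃ T, G.IsMST wf T ∧ e ∉ T) ∨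
  (∀ wf : G.E → ℝ, (∀ e', wf e' ∈ G.I e') → ∃ T, G.IsMST wf T ∧ e ∈ T)

end UncGraph

/-- The instance obtained from `G` by querying the edges of `Q` under true
values `w`: the intervals of queried edges collapse to the revealed values. -/
def UncGraph.restrict (G : UncGraph) (w : G.E → ℝ) (Q : Finset G.E) : UncGraph where
  V := G.V
  E := G.E
  fintV := G.fintV
  fintE := G.fintE
  decV := G.decV
  decE := G.decE
  ends := G.ends
  conn := G.conn
  L := fun e => if e ∈ Q then w e else G.L e
  U := fun e => if e ∈ Q then w e else G.U e
  LU := fun e => by by_cases h : e ∈ Q <;> simp [h, G.LU e]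
  pw := fun e => if e ∈ Q then w e else G.pw e
  pw_mem := fun e => by
    by_cases h : e ∈ Q
    · simp [h]
    · simpa [h] using G.pw_mem e

/-- A deterministic adaptive query algorithm: given the instance and the set of
already queried edges together with the revealed values, it either picks the next
edge to query or stops (`none`).  The lawfulness condition states that the
decision may only depend on the revealed values of already queried edges. -/
structure Algorithm where
  next : ∀ G : UncGraph, Finset G.E → (G.E → ℝ) → Option G.E
  lawful : ∀ (G : UncGraph) (Q : Finset G.E) (w w' : G.E → ℝ),
    (∀ e ∈ Q, w e = w' e) → next G Q w = next G Q w'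

namespace Algorithm

/-- The set of edges queried by `A` after `n` steps, on instance `G` with true
values `w`; the algorithm stops as soon as the queried set is feasible. -/
def runQueries (A : Algorithm) (G : UncGraph) (w : G.E → ℝ) : ℕ → Finset G.E
  | 0 => ∅
  | n + 1 =>
    let Q := A.runQueries G w n
    if G.Feasible w Q then Q
    else
      match A.next G Q w with
      | some e => insert e Q
      | none => Q

/-- The final query set of the run of `A`. -/
def finalQueries (A : Algorithm) (G : UncGraph) (w : G.E → ℝ) : Finset G.E :=
  A.runQueries G w (Fintype.card G.E + 1)

/-- The number of queries made by `A` on instance `G` with true values `w`. -/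
def algCost (A : Algorithm) (G : UncGraph) (w : G.E → ℝ) : ℕ :=
  (A.finalQueries G w).card

/-- `A` solves every instance: it always ends with a feasible query set. -/
def Solves (A : Algorithm) : Prop :=
  ∀ (G : UncGraph) (w : G.E → ℝ), G.Valid w → G.Feasible w (A.finalQueries G w)

/-- `A` is `α`-consistent: on instances with correct predictions it makes at
most `α · |OPT|` queries. -/
def Consistent (A : Algorithm) (α : ℝ) : Prop :=
  ∀ G : UncGraph, (A.algCost G G.pw : ℝ) ≤ α * (G.optCost G.pw : ℝ)

/-- `A` is `β`-robust: it makes at most `β · |OPT|` queries on every instance. -/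
def Robust (A : Algorithm) (β : ℝ) : Prop :=
  ∀ (G : UncGraph) (w : G.E → ℝ), G.Valid w → (A.algCost G w : ℝ) ≤ β * (G.optCost w : ℝ)

/-- Run of a preprocessing algorithm: it stops exactly when `next` returns
`none` (rather than when the queried set is feasible). -/
def runPre (A : Algorithm) (G : UncGraph) (w : G.E → ℝ) : ℕ → Finset G.E
  | 0 => ∅
  | n + 1 =>
    let Q := A.runPre G w n
    match A.next G Q w with
    | some e => insert e Q
    | none => Q

/-- The final query set of a preprocessing run of `A`. -/
def preQueries (A : Algorithm) (G : UncGraph) (w : G.E → ℝ) : Finset G.E :=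
  A.runPre G w (Fintype.card G.E + 1)

end Algorithm

namespace UncGraph

variable (G : UncGraph)

lemma conn_refl (S : Finset G.E) (v : G.V) : G.ConnectsVia S v v :=
  Relation.ReflTransGen.refl

lemma ends_rep (e : G.E) : ∃ x y : G.V, G.ends e = s(x, y) :=
  Sym2.inductionOn (f := fun z => ∃ x y : G.V, z = s(x, y)) (G.ends e)
    (fun x y => ⟨x, y, rfl⟩)

lemma conn_trans {S : Finset G.E} {u v x : G.V} (h1 : G.ConnectsVia S u v)
    (h2 : G.ConnectsVia S v x) : G.ConnectsVia S u x :=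
  Relation.ReflTransGen.trans h1 h2

lemma conn_symm {S : Finset G.E} {u v : G.V} (h : G.ConnectsVia S u v) :
    G.ConnectsVia S v u := by
  have hsymm : Symmetric (fun a b => ∃ e ∈ S, G.ends e = s(a, b)) := by
    intro a b ⟨e, he, hab⟩
    exact ⟨e, he, by rwa [Sym2.eq_swap]⟩
  exact (@Relation.ReflTransGen.stdSymm G.V _ ⟨fun a b hab => hsymm hab⟩).symm _ _ h

lemma conn_mono {S S' : Finset G.E} (hss : S ⊆ S') {u v : G.V}
    (h : G.ConnectsVia S u v) : G.ConnectsVia S' u v := by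
  refine Relation.ReflTransGen.mono ?_ _ _ h
  rintro a b ⟨e, he, hab⟩
  exact ⟨e, hss he, hab⟩

lemma conn_single {S : Finset G.E} {e : G.E} {x y : G.V} (he : e ∈ S)
    (hxy : G.ends e = s(x, y)) : G.ConnectsVia S x y :=
  Relation.ReflTransGen.single ⟨e, he, hxy⟩

/-- crossing lemma: a walk from inside `A` to outside `A` uses a crossing edge. -/
lemma conn_cross {S : Finset G.E} {u v : G.V} (A : G.V → Prop)
    (h : G.ConnectsVia S u v) (hu : A u) (hv : ¬ A v) :
    ∃ e ∈ S, ∃ x y, G.ends e = s(x, y) ∧ A x ∧ ¬ A y := by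
  induction h using Relation.ReflTransGen.head_induction_on with
  | refl => exact absurd hu hv
  | head hstep htail ih =>
    rename_i a c
    obtain ⟨e, heS, hends⟩ := hstep
    by_cases hAc : A c
    · exact ih hAc
    · exact ⟨e, heS, a, c, hends, hu, hAc⟩

/-- truncation: a walk to `x` either avoids `e` or first reaches an endpoint of `e`. -/
lemma conn_erase_endpoint {S : Finset G.E} {e : G.E} {x y u : G.V}
    (hxy : G.ends e = s(x, y)) (h : G.ConnectsVia S u x) :
    G.ConnectsVia (S.erase e) u x ∨ G.ConnectsVia (S.erase e) u y := by
  induction h using Relation.ReflTransGen.head_induction_on with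
  | refl => exact Or.inl (G.conn_refl _ _)
  | head hstep htail ih =>
    rename_i a c
    obtain ⟨f, hfS, hends⟩ := hstep
    by_cases hfe : f = e
    · rw [hfe] at hends
      have hac : (a = x ∧ c = y) ∨ (a = y ∧ c = x) :=
        Sym2.eq_iff.mp (hends.symm.trans hxy)
      rcases hac with ⟨h1, h2⟩ | ⟨h1, h2⟩
      · exact Or.inl (h1 ▸ G.conn_refl _ _)
      · exact Or.inr (h1 ▸ G.conn_refl _ _)
    · have hstep' : G.ConnectsVia (S.erase e) a c :=
        G.conn_single (Finset.mem_erase.mpr ⟨hfe, hfS⟩) hends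
      rcases ih with h' | h'
      · exact Or.inl (G.conn_trans hstep' h')
      · exact Or.inr (G.conn_trans hstep' h')

/-- replacement: if the endpoints of `g` are connected in `S`, then `g` is redundant. -/
lemma conn_insert_elim {S : Finset G.E} {g : G.E} {x y u v : G.V}
    (hg : G.ends g = s(x, y)) (hxy : G.ConnectsVia S x y)
    (h : G.ConnectsVia (insert g S) u v) : G.ConnectsVia S u v := by
  induction h using Relation.ReflTransGen.head_induction_on with
  | refl => exact G.conn_refl _ _
  | head hstep htail ih =>
    rename_i a c
    obtain ⟨f, hfS, hends⟩ := hstep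
    rcases Finset.mem_insert.mp hfS with hfg | hfS'
    · rw [hfg] at hends
      have hac : (a = x ∧ c = y) ∨ (a = y ∧ c = x) :=
        Sym2.eq_iff.mp (hends.symm.trans hg)
      rcases hac with ⟨h1, h2⟩ | ⟨h1, h2⟩
      · subst h1; subst h2; exact G.conn_trans hxy ih
      · subst h1; subst h2; exact G.conn_trans (G.conn_symm hxy) ih
    · exact G.conn_trans (G.conn_single hfS' hends) ih

/-- W lemma: if `u,v` are connected in `S` but not in `S \ {f}`, then `u` and `v`
connect to the two endpoints of `f` in `S \ {f}`. -/
lemma conn_w {S : Finset G.E} {f : G.E} {x y u v : G.V}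
    (hf : G.ends f = s(x, y)) (huv : G.ConnectsVia S u v)
    (hne : ¬ G.ConnectsVia (S.erase f) u v) :
    (G.ConnectsVia (S.erase f) u x ∧ G.ConnectsVia (S.erase f) v y) ∨
    (G.ConnectsVia (S.erase f) u y ∧ G.ConnectsVia (S.erase f) v x) := by
  induction huv using Relation.ReflTransGen.head_induction_on with
  | refl => exact absurd (G.conn_refl _ _) hne
  | head hstep htail ih =>
    rename_i a c
    obtain ⟨e, heS, hends⟩ := hstep
    by_cases hef : e = f
    · rw [hef] at hends
      have hac : (a = x ∧ c = y) ∨ (a = y ∧ c = x) :=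
        Sym2.eq_iff.mp (hends.symm.trans hf)
      by_cases hcv : G.ConnectsVia (S.erase f) c v
      · rcases hac with ⟨h1, h2⟩ | ⟨h1, h2⟩
        · subst h1; subst h2
          exact Or.inl ⟨G.conn_refl _ _, G.conn_symm hcv⟩
        · subst h1; subst h2
          exact Or.inr ⟨G.conn_refl _ _, G.conn_symm hcv⟩
      · rcases ih hcv with ⟨hcx, hvy⟩ | ⟨hcy, hvx⟩
        · rcases hac with ⟨h1, h2⟩ | ⟨h1, h2⟩
          · subst h1; subst h2
            -- a = x, c = y, c ~ x : then v ~ y and a ~ x refl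
            exact Or.inl ⟨G.conn_refl _ _, hvy⟩
          · subst h1; subst h2
            -- a = y, c = x, c ~ x refl case: c~x gives nothing new; v ~ y = a
            exact absurd (G.conn_symm hvy) hne
        · rcases hac with ⟨h1, h2⟩ | ⟨h1, h2⟩
          · subst h1; subst h2
            exact absurd (G.conn_symm hvx) hne
          · subst h1; subst h2
            exact Or.inr ⟨G.conn_refl _ _, hvx⟩
    · have hstep' : G.ConnectsVia (S.erase f) a c :=
        G.conn_single (Finset.mem_erase.mpr ⟨hef, heS⟩) hends
      by_cases hcv : G.ConnectsVia (S.erase f) c v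
      · exact absurd (G.conn_trans hstep' hcv) hne
      · rcases ih hcv with ⟨hcx, hvy⟩ | ⟨hcy, hvx⟩
        · exact Or.inl ⟨G.conn_trans hstep' hcx, hvy⟩
        · exact Or.inr ⟨G.conn_trans hstep' hcy, hvx⟩

/-- insertion cases for component counting. -/
lemma conn_insert_cases {S : Finset G.E} {g : G.E} {x y u v : G.V}
    (hg : G.ends g = s(x, y)) (h : G.ConnectsVia (insert g S) u v) :
    G.ConnectsVia S u v ∨
    ((G.ConnectsVia S u x ∨ G.ConnectsVia S u y) ∧
     (G.ConnectsVia S v x ∨ G.ConnectsVia S v y)) := by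
  induction h using Relation.ReflTransGen.head_induction_on with
  | refl => exact Or.inl (G.conn_refl _ _)
  | head hstep htail ih =>
    rename_i a c
    obtain ⟨f, hfS, hends⟩ := hstep
    rcases Finset.mem_insert.mp hfS with hfg | hfS'
    · rw [hfg] at hends
      have hac : (a = x ∧ c = y) ∨ (a = y ∧ c = x) :=
        Sym2.eq_iff.mp (hends.symm.trans hg)
      have hvpart : G.ConnectsVia S v x ∨ G.ConnectsVia S v y := by
        rcases ih with hcv | ⟨_, hvp⟩
        · rcases hac with ⟨h1, h2⟩ | ⟨h1, h2⟩
          · exact Or.inr (h2 ▸ G.conn_symm hcv)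
          · exact Or.inl (h2 ▸ G.conn_symm hcv)
        · exact hvp
      have hupart : G.ConnectsVia S a x ∨ G.ConnectsVia S a y := by
        rcases hac with ⟨h1, _⟩ | ⟨h1, _⟩
        · exact Or.inl (h1 ▸ G.conn_refl _ _)
        · exact Or.inr (h1 ▸ G.conn_refl _ _)
      exact Or.inr ⟨hupart, hvpart⟩
    · have hstep' : G.ConnectsVia S a c := G.conn_single hfS' hends
      rcases ih with hcv | ⟨hcp, hvp⟩
      · exact Or.inl (G.conn_trans hstep' hcv)
      · refine Or.inr ⟨?_, hvp⟩
        rcases hcp with h' | h'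
        · exact Or.inl (G.conn_trans hstep' h')
        · exact Or.inr (G.conn_trans hstep' h')

end UncGraph

namespace UncGraph

variable (G : UncGraph)

/-- connected component of `v` w.r.t. edge set `S`. -/
def compId (S : Finset G.E) (v : G.V) : Finset G.V :=
  Finset.univ.filter (fun u => G.ConnectsVia S u v)

lemma mem_compId {S : Finset G.E} {u v : G.V} :
    u ∈ G.compId S v ↔ G.ConnectsVia S u v := by
  simp [compId]

lemma compId_eq_iff {S : Finset G.E} {u v : G.V} :
    G.compId S u = G.compId S v ↔ G.ConnectsVia S u v := by
  constructor
  · intro h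
    have : v ∈ G.compId S u := h ▸ (G.mem_compId.mpr (G.conn_refl _ _))
    exact G.conn_symm (G.mem_compId.mp this)
  · intro h
    ext t
    simp only [mem_compId]
    exact ⟨fun ht => G.conn_trans ht h, fun ht => G.conn_trans ht (G.conn_symm h)⟩

def ncomp (S : Finset G.E) : ℕ := (Finset.univ.image (G.compId S)).card

lemma conn_empty {u v : G.V} (h : G.ConnectsVia (∅ : Finset G.E) u v) : u = v := by
  induction h using Relation.ReflTransGen.head_induction_on with
  | refl => rfl
  | head hstep htail ih =>
    obtain ⟨e, he, _⟩ := hstep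
    exact absurd he (Finset.notMem_empty e)

lemma ncomp_empty : G.ncomp (∅ : Finset G.E) = Fintype.card G.V := by
  have h : ∀ v : G.V, G.compId ∅ v = {v} := by
    intro v
    ext u
    simp only [mem_compId, Finset.mem_singleton]
    exact ⟨fun h => G.conn_empty h, fun h => h ▸ G.conn_refl _ _⟩
  unfold ncomp
  rw [show Finset.univ.image (G.compId ∅) = Finset.univ.image (fun v : G.V => ({v} : Finset G.V))
    from Finset.image_congr (fun v _ => h v)]
  rw [Finset.card_image_of_injective _ (fun a b hab => Finset.singleton_injective hab)]
  simp

lemma ncomp_le_insert (S : Finset G.E) (g : G.E) :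
    G.ncomp S ≤ G.ncomp (insert g S) + 1 := by
  obtain ⟨x, y, hg⟩ := G.ends_rep g
  -- map on components
  set F : Finset G.V → Finset G.V :=
    fun A => Finset.univ.filter (fun u => ∃ v ∈ A, G.ConnectsVia (insert g S) u v) with hF
  have hFcomp : ∀ w : G.V, F (G.compId S w) = G.compId (insert g S) w := by
    intro w
    ext u
    simp only [hF, Finset.mem_filter, Finset.mem_univ, true_and, mem_compId]
    constructor
    · rintro ⟨v, hv, huv⟩
      exact G.conn_trans huv (G.conn_mono (Finset.subset_insert _ _) hv)
    · intro h
      exact ⟨w, G.conn_refl _ _, h⟩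
  classical
  set P' := Finset.univ.image (G.compId S) with hP'
  set Pn := Finset.univ.image (G.compId (insert g S)) with hPn
  have hinj : Set.InjOn F ((P'.erase (G.compId S y)) : Set (Finset G.V)) := by
    intro A hA B hB hFAB
    simp only [Finset.coe_erase, Set.mem_diff, Finset.mem_coe, Finset.coe_image] at hA hB
    have hA1 : A ∈ P' := hA.1
    have hA2 : A ≠ G.compId S y := by simpa using hA.2
    have hB1 : B ∈ P' := hB.1
    have hB2 : B ≠ G.compId S y := by simpa using hB.2
    obtain ⟨u, _, hu⟩ := Finset.mem_image.mp (hP' ▸ hA1)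
    obtain ⟨v, _, hv⟩ := Finset.mem_image.mp (hP' ▸ hB1)
    subst hu; subst hv
    rw [hFcomp, hFcomp] at hFAB
    have huv : G.ConnectsVia (insert g S) u v := G.compId_eq_iff.mp hFAB
    rcases G.conn_insert_cases hg huv with h' | ⟨hup, hvp⟩
    · exact G.compId_eq_iff.mpr h'
    · have hux : G.ConnectsVia S u x := by
        rcases hup with h' | h'
        · exact h'
        · exact absurd (G.compId_eq_iff.mpr h') hA2
      have hvx : G.ConnectsVia S v x := by
        rcases hvp with h' | h'
        · exact h'
        · exact absurd (G.compId_eq_iff.mpr h') hB2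
      exact G.compId_eq_iff.mpr (G.conn_trans hux (G.conn_symm hvx))
  have hmaps : ∀ A ∈ P'.erase (G.compId S y), F A ∈ Pn := by
    intro A hA
    obtain ⟨u, _, hu⟩ := Finset.mem_image.mp (Finset.mem_erase.mp hA).2
    subst hu
    rw [hFcomp]
    exact Finset.mem_image.mpr ⟨u, Finset.mem_univ _, rfl⟩
  have hcard : (P'.erase (G.compId S y)).card ≤ Pn.card :=
    Finset.card_le_card_of_injOn F hmaps hinj
  have herase : P'.card ≤ (P'.erase (G.compId S y)).card + 1 := by
    by_cases hy : G.compId S y ∈ P'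
    · rw [Finset.card_erase_of_mem hy]
      omega
    · rw [Finset.erase_eq_of_notMem hy]
      omega
  unfold ncomp
  rw [← hP', ← hPn]
  omega

lemma card_le_ncomp_add (S : Finset G.E) :
    Fintype.card G.V ≤ G.ncomp S + S.card := by
  classical
  induction S using Finset.induction_on with
  | empty => rw [G.ncomp_empty]; simp
  | insert g S' hnotmem ih =>
    have h1 := G.ncomp_le_insert S' g
    rw [Finset.card_insert_of_notMem hnotmem]
    omega

/-- a spanning connected edge set has at least `|V| - 1` edges. -/
lemma card_V_le_of_conn {S : Finset G.E} (h : ∀ u v : G.V, G.ConnectsVia S u v) :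
    Fintype.card G.V ≤ S.card + 1 := by
  classical
  have := G.card_le_ncomp_add S
  rcases isEmpty_or_nonempty G.V with hV | hV
  · simp [Fintype.card_eq_zero]
  · obtain ⟨v₀⟩ := hV
    have hone : G.ncomp S ≤ 1 := by
      apply Finset.card_le_one.mpr
      intro a ha b hb
      obtain ⟨u, _, hu⟩ := Finset.mem_image.mp ha
      obtain ⟨v, _, hv⟩ := Finset.mem_image.mp hb
      subst hu; subst hv
      exact G.compId_eq_iff.mpr (h u v)
    omega

/-- removing an edge from a spanning tree disconnects its endpoints. -/
lemma tree_bridge {T : Finset G.E} (hsp : G.IsSpanningTree T) {e : G.E} {a b : G.V}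
    (he : e ∈ T) (hab : G.ends e = s(a, b)) :
    ¬ G.ConnectsVia (T.erase e) a b := by
  intro hconn
  have hall : ∀ u v : G.V, G.ConnectsVia (T.erase e) u v := by
    intro u v
    have h1 : G.ConnectsVia (insert e (T.erase e)) u v := by
      rw [Finset.insert_erase he]; exact hsp.1 u v
    exact G.conn_insert_elim hab hconn h1
  have hmin := G.card_V_le_of_conn hall
  rw [Finset.card_erase_of_mem he] at hmin
  have hcard := hsp.2
  have hpos : 1 ≤ T.card := Finset.card_pos.mpr ⟨e, he⟩
  omega

lemma tree_ends_ne {T : Finset G.E} (hsp : G.IsSpanningTree T) {e : G.E} {a b : G.V}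
    (he : e ∈ T) (hab : G.ends e = s(a, b)) : a ≠ b := by
  intro h
  exact G.tree_bridge hsp he hab (h ▸ G.conn_refl _ _)

/-- exchange: removing `e` from a spanning tree and adding an edge `f`
crossing the resulting cut yields a spanning tree. -/
lemma exchange_spanning {T : Finset G.E} (hsp : G.IsSpanningTree T)
    {e f : G.E} {a b x y : G.V} (he : e ∈ T) (hf : f ∉ T)
    (hae : G.ends e = s(a, b)) (haf : G.ends f = s(x, y))
    (hcut : ¬ G.ConnectsVia (T.erase e) x y) :
    G.IsSpanningTree (insert f (T.erase e)) := by
  have hside : ∀ v : G.V, G.ConnectsVia (T.erase e) v a ∨ G.ConnectsVia (T.erase e) v b :=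
    fun v => G.conn_erase_endpoint hae (hsp.1 v a)
  have hxy : (G.ConnectsVia (T.erase e) x a ∧ G.ConnectsVia (T.erase e) y b) ∨
      (G.ConnectsVia (T.erase e) x b ∧ G.ConnectsVia (T.erase e) y a) := by
    rcases hside x with hx | hx <;> rcases hside y with hy | hy
    · exact absurd (G.conn_trans hx (G.conn_symm hy)) hcut
    · exact Or.inl ⟨hx, hy⟩
    · exact Or.inr ⟨hx, hy⟩
    · exact absurd (G.conn_trans hx (G.conn_symm hy)) hcut
  have hsub : T.erase e ⊆ insert f (T.erase e) := Finset.subset_insert _ _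
  have hab' : G.ConnectsVia (insert f (T.erase e)) a b := by
    have hstep : G.ConnectsVia (insert f (T.erase e)) x y :=
      G.conn_single (Finset.mem_insert_self _ _) haf
    rcases hxy with ⟨hx, hy⟩ | ⟨hx, hy⟩
    · exact G.conn_trans (G.conn_symm (G.conn_mono hsub hx))
        (G.conn_trans hstep (G.conn_mono hsub hy))
    · exact G.conn_trans (G.conn_symm (G.conn_mono hsub hy))
        (G.conn_trans (G.conn_symm hstep) (G.conn_mono hsub hx))
  constructor
  · intro u v
    have hu := hside u
    have hv := hside v
    have hconn_ua : ∀ w : G.V, G.ConnectsVia (insert f (T.erase e)) w a := by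
      intro w
      rcases hside w with h' | h'
      · exact G.conn_mono hsub h'
      · exact G.conn_trans (G.conn_mono hsub h') (G.conn_symm hab')
    exact G.conn_trans (hconn_ua u) (G.conn_symm (hconn_ua v))
  · have hfne : f ∉ T.erase e := fun hmem => hf (Finset.mem_of_mem_erase hmem)
    rw [Finset.card_insert_of_notMem hfne, Finset.card_erase_of_mem he]
    have hpos : 1 ≤ T.card := Finset.card_pos.mpr ⟨e, he⟩
    have := hsp.2
    omega

lemma sum_exchange {T : Finset G.E} {e f : G.E} (wf : G.E → ℝ)
    (he : e ∈ T) (hf : f ∉ T) :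
    ∑ x ∈ insert f (T.erase e), wf x = ∑ x ∈ T, wf x + wf f - wf e := by
  have hfne : f ∉ T.erase e := fun hmem => hf (Finset.mem_of_mem_erase hmem)
  rw [Finset.sum_insert hfne, Finset.sum_erase_eq_sub he]
  ring

end UncGraph

namespace UncGraph

variable (G : UncGraph)

/-- contribution of a single edge to the incidence count. -/
def tau (e : G.E) (v : G.V) : ℕ :=
  if G.ends e = s(v, v) then 2 else if v ∈ G.ends e then 1 else 0

lemma incCount_eq_sum_tau (S : Finset G.E) (v : G.V) :
    G.incCount S v = ∑ e ∈ S, G.tau e v := rfl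

lemma incCount_erase_add_tau {S : Finset G.E} {e : G.E} (he : e ∈ S) (v : G.V) :
    G.incCount (S.erase e) v + G.tau e v = G.incCount S v := by
  simpa [incCount_eq_sum_tau] using Finset.sum_erase_add S (fun f => G.tau f v) he

lemma incCount_insert {S : Finset G.E} {f : G.E} (hf : f ∉ S) (v : G.V) :
    G.incCount (insert f S) v = G.tau f v + G.incCount S v := by
  simpa [incCount_eq_sum_tau] using Finset.sum_insert (f := fun e => G.tau e v) hf

lemma tau_eq_one {e : G.E} {x y v : G.V} (hends : G.ends e = s(x, y)) (hxy : x ≠ y) :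
    G.tau e v = if v = x ∨ v = y then 1 else 0 := by
  unfold tau
  rw [hends]
  have hnl : ¬ s(x, y) = s(v, v) := by
    intro h
    rcases Sym2.eq_iff.mp h with ⟨h1, h2⟩ | ⟨h1, h2⟩ <;> exact hxy (h1.trans h2.symm)
  rw [if_neg hnl]
  by_cases hv : v = x ∨ v = y
  · rw [if_pos (Sym2.mem_iff.mpr hv), if_pos hv]
  · rw [if_neg (fun h => hv (Sym2.mem_iff.mp h)), if_neg hv]

lemma tau_loop {e : G.E} {u v : G.V} (hends : G.ends e = s(u, u)) :
    G.tau e v = if v = u then 2 else 0 := by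
  unfold tau
  rw [hends]
  by_cases hv : v = u
  · subst hv; simp
  · have h1 : ¬ s(u, u) = s(v, v) := by
      intro h
      rcases Sym2.eq_iff.mp h with ⟨h1, _⟩ | ⟨h1, _⟩ <;> exact hv h1.symm
    have h2 : v ∉ s(u, u) := by
      intro h
      rcases Sym2.mem_iff.mp h with h' | h' <;> exact hv h'
    rw [if_neg h1, if_neg h2, if_neg hv]

lemma inc_pos_of_mem {S : Finset G.E} {e : G.E} {v : G.V} (he : e ∈ S)
    (hv : v ∈ G.ends e) : 1 ≤ G.incCount S v := by
  rw [incCount_eq_sum_tau]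
  have h1 : 1 ≤ G.tau e v := by
    unfold tau
    by_cases h : G.ends e = s(v, v)
    · rw [if_pos h]; omega
    · rw [if_neg h, if_pos hv]
  calc 1 ≤ G.tau e v := h1
    _ ≤ ∑ f ∈ S, G.tau f v :=
      Finset.single_le_sum (f := fun f => G.tau f v) (fun f _ => Nat.zero_le _) he

lemma exists_edge_of_inc_ne {S : Finset G.E} {v : G.V} (h : G.incCount S v ≠ 0) :
    ∃ e ∈ S, v ∈ G.ends e := by
  by_contra hcon
  push_neg at hcon
  apply h
  rw [incCount_eq_sum_tau]
  apply Finset.sum_eq_zero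
  intro e he
  unfold tau
  have hv : v ∉ G.ends e := hcon e he
  have h1 : ¬ G.ends e = s(v, v) := by
    intro h'
    exact hv (h' ▸ Sym2.mem_mk_left v v)
  rw [if_neg h1, if_neg hv]

/-- redundant edge removal preserves connectivity. -/
lemma conn_erase_of_conn_ends {S : Finset G.E} {g : G.E} {u v x y : G.V}
    (hg : g ∈ S) (hends : G.ends g = s(u, v))
    (hc : G.ConnectsVia (S.erase g) u v) (h : G.ConnectsVia S x y) :
    G.ConnectsVia (S.erase g) x y := by
  apply G.conn_insert_elim hends hc
  rwa [Finset.insert_erase hg]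

lemma minimal_no_loop {S : Finset G.E} {x y : G.V}
    (hc : G.ConnectsVia S x y)
    (hmin : ∀ g ∈ S, ¬ G.ConnectsVia (S.erase g) x y)
    {g : G.E} (hg : g ∈ S) {u : G.V} : G.ends g ≠ s(u, u) := by
  intro hends
  exact hmin g hg (G.conn_erase_of_conn_ends hg hends (G.conn_refl _ _) hc)

/-- in a minimal connector, there is at most one edge at the start vertex. -/
lemma minimal_unique_at_start {S : Finset G.E} {x y : G.V} (hxy : x ≠ y)
    (hc : G.ConnectsVia S x y)
    (hmin : ∀ g ∈ S, ¬ G.ConnectsVia (S.erase g) x y)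
    {f g : G.E} (hf : f ∈ S) (hg : g ∈ S)
    (hxf : x ∈ G.ends f) (hxg : x ∈ G.ends g) : f = g := by
  by_contra hfg
  obtain ⟨t, hft⟩ := Sym2.mem_iff_exists.mp hxf
  obtain ⟨r, hgr⟩ := Sym2.mem_iff_exists.mp hxg
  -- y connects to t avoiding f
  have hyt : G.ConnectsVia (S.erase f) y t := by
    rcases G.conn_w hft hc (hmin f hf) with ⟨_, hyt⟩ | ⟨_, hyx⟩
    · exact hyt
    · exact absurd (G.conn_symm hyx) (hmin f hf)
  by_cases hq : G.ConnectsVia ((S.erase f).erase g) y t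
  · -- then x ~ y avoiding g
    have hsub : (S.erase f).erase g ⊆ S.erase g := by
      rw [Finset.erase_right_comm]
      exact Finset.erase_subset _ _
    have hfmem : f ∈ S.erase g := Finset.mem_erase.mpr ⟨hfg, hf⟩
    have : G.ConnectsVia (S.erase g) x y :=
      G.conn_trans (G.conn_single hfmem hft) (G.conn_symm (G.conn_mono hsub hq))
    exact hmin g hg this
  · rcases G.conn_w hgr hyt hq with ⟨hyx, _⟩ | ⟨_, htx⟩
    · have hsub : (S.erase f).erase g ⊆ S.erase f := Finset.erase_subset _ _
      exact hmin f hf (G.conn_symm (G.conn_mono hsub hyx))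
    · have hsub : (S.erase f).erase g ⊆ S.erase f := Finset.erase_subset _ _
      have : G.ConnectsVia (S.erase f) x y :=
        G.conn_trans (G.conn_symm (G.conn_mono hsub htx)) (G.conn_symm hyt)
      exact hmin f hf this

lemma minimal_deg_start {S : Finset G.E} {x y : G.V} (hxy : x ≠ y)
    (hc : G.ConnectsVia S x y)
    (hmin : ∀ g ∈ S, ¬ G.ConnectsVia (S.erase g) x y) :
    G.incCount S x = 1 := by
  -- lower bound
  obtain ⟨c, hstep, -⟩ := Relation.ReflTransGen.cases_head_iff.mp hc |>.resolve_left hxy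
  obtain ⟨f₀, hf₀, hends₀⟩ := hstep
  have hx₀ : x ∈ G.ends f₀ := hends₀ ▸ Sym2.mem_mk_left x c
  have hge : 1 ≤ G.incCount S x := G.inc_pos_of_mem hf₀ hx₀
  -- upper bound : incCount = card of filter, filter has at most one element
  have hnl : ∀ e ∈ S, ∀ u : G.V, G.ends e ≠ s(u, u) := by
    intro e he u
    exact G.minimal_no_loop hc hmin he
  have hform : G.incCount S x = (S.filter (fun e => x ∈ G.ends e)).card := by
    rw [incCount_eq_sum_tau, Finset.card_filter]
    apply Finset.sum_congr rfl
    intro e he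
    unfold tau
    rw [if_neg (hnl e he x)]
  rw [hform]
  have hle : (S.filter (fun e => x ∈ G.ends e)).card ≤ 1 := by
    apply Finset.card_le_one.mpr
    intro a ha b hb
    rw [Finset.mem_filter] at ha hb
    exact G.minimal_unique_at_start hxy hc hmin ha.1 hb.1 ha.2 hb.2
  rw [hform] at hge
  omega

lemma minimal_symm {S : Finset G.E} {x y : G.V}
    (hmin : ∀ g ∈ S, ¬ G.ConnectsVia (S.erase g) x y) :
    ∀ g ∈ S, ¬ G.ConnectsVia (S.erase g) y x :=
  fun g hg hcon => hmin g hg (G.conn_symm hcon)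

/-- the path structure of a minimal connector. -/
lemma minimal_path : ∀ (n : ℕ) (S : Finset G.E) (x y : G.V), S.card = n → x ≠ y →
    G.ConnectsVia S x y → (∀ g ∈ S, ¬ G.ConnectsVia (S.erase g) x y) →
    G.incCount S x = 1 ∧ G.incCount S y = 1 ∧
    (∀ v, v ≠ x → v ≠ y → G.incCount S v = 0 ∨ G.incCount S v = 2) ∧
    (∀ v, G.incCount S v ≠ 0 → G.ConnectsVia S x v) := by
  intro n
  induction n using Nat.strong_induction_on with
  | _ n IH =>
    intro S x y hcard hxy hc hmin
    have hdx : G.incCount S x = 1 := G.minimal_deg_start hxy hc hmin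
    have hdy : G.incCount S y = 1 :=
      G.minimal_deg_start hxy.symm (G.conn_symm hc) (G.minimal_symm hmin)
    obtain ⟨f, hfS, hxf⟩ := G.exists_edge_of_inc_ne (by omega : G.incCount S x ≠ 0)
    obtain ⟨z, hfz⟩ := Sym2.mem_iff_exists.mp hxf
    have hzx : z ≠ x := by
      intro h
      exact G.minimal_no_loop hc hmin hfS (h ▸ hfz)
    by_cases hzy : z = y
    · -- S = {f}
      subst hzy
      have huniq : ∀ g ∈ S, g = f := by
        intro g hg
        by_contra hgf
        have hfm : f ∈ S.erase g := Finset.mem_erase.mpr ⟨fun h => hgf h.symm, hfS⟩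
        exact hmin g hg (G.conn_single hfm hfz)
      have hS : S = {f} := Finset.eq_singleton_iff_unique_mem.mpr ⟨hfS, huniq⟩
      subst hS
      refine ⟨hdx, hdy, ?_, ?_⟩
      · intro v hvx hvy
        left
        rw [incCount_eq_sum_tau, Finset.sum_singleton, G.tau_eq_one hfz hxy]
        rw [if_neg (by tauto)]
      · intro v hv
        obtain ⟨e, he, hve⟩ := G.exists_edge_of_inc_ne hv
        rw [Finset.mem_singleton] at he
        subst he
        rcases Sym2.mem_iff.mp (hfz ▸ hve) with h | h
        · exact h ▸ G.conn_refl _ _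
        · exact h ▸ hc
    · -- recurse on S.erase f
      set S' := S.erase f with hS'
      have hfS' : f ∉ S' := Finset.notMem_erase _ _
      have hzyc : G.ConnectsVia S' z y := by
        rcases G.conn_w hfz hc (hmin f hfS) with ⟨_, hyz⟩ | ⟨_, hyx⟩
        · exact G.conn_symm hyz
        · exact absurd (G.conn_symm hyx) (hmin f hfS)
      have hmin' : ∀ g ∈ S', ¬ G.ConnectsVia (S'.erase g) z y := by
        intro g hg hcon
        have hgS : g ∈ S := Finset.mem_of_mem_erase hg
        have hgf : g ≠ f := (Finset.mem_erase.mp hg).1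
        have hfm : f ∈ S.erase g := Finset.mem_erase.mpr ⟨fun h => hgf h.symm, hfS⟩
        have hsub : S'.erase g ⊆ S.erase g := by
          rw [hS', Finset.erase_right_comm]
          exact Finset.erase_subset _ _
        exact hmin g hgS
          (G.conn_trans (G.conn_single hfm hfz) (G.conn_mono hsub hcon))
      have hcard' : S'.card = n - 1 := by
        rw [hS', Finset.card_erase_of_mem hfS, hcard]
      have hpos : 1 ≤ n := by
        rw [← hcard]
        exact Finset.card_pos.mpr ⟨f, hfS⟩
      obtain ⟨iz, iy, iint, isup⟩ :=
        IH (n - 1) (by omega) S' z y hcard' (fun h => hzy h) hzyc hmin'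
      have hxS' : G.incCount S' x = 0 := by
        by_contra hx0
        obtain ⟨e, he, hxe⟩ := G.exists_edge_of_inc_ne hx0
        have : e = f := G.minimal_unique_at_start hxy hc hmin
          (Finset.mem_of_mem_erase he) hfS hxe hxf
        exact hfS' (this ▸ he)
      have hSins : S = insert f S' := (Finset.insert_erase hfS).symm
      have hinc : ∀ v, G.incCount S v = G.tau f v + G.incCount S' v := by
        intro v
        rw [hSins, G.incCount_insert hfS']
      have htau : ∀ v, G.tau f v = if v = x ∨ v = z then 1 else 0 :=
        fun v => G.tau_eq_one hfz (fun h => hzx h.symm)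
      have hfconn : G.ConnectsVia S x z := G.conn_single hfS hfz
      refine ⟨hdx, hdy, ?_, ?_⟩
      · intro v hvx hvy
        by_cases hvz : v = z
        · right
          rw [hinc, htau, if_pos (Or.inr hvz), hvz, iz]
        · rw [hinc, htau, if_neg (by tauto)]
          simpa using iint v hvz hvy
      · intro v hv
        by_cases hvx : v = x
        · exact hvx ▸ G.conn_refl _ _
        · by_cases hvz : v = z
          · exact hvz ▸ hfconn
          · rw [hinc, htau, if_neg (by tauto)] at hv
            simp only [Nat.zero_add] at hv
            have := isup v hv
            exact G.conn_trans hfconn (G.conn_mono (hS' ▸ Finset.erase_subset _ _) this)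

lemma exists_minimal_connector : ∀ (n : ℕ) (S : Finset G.E) (x y : G.V), S.card = n →
    G.ConnectsVia S x y →
    ∃ P ⊆ S, G.ConnectsVia P x y ∧ ∀ g ∈ P, ¬ G.ConnectsVia (P.erase g) x y := by
  intro n
  induction n using Nat.strong_induction_on with
  | _ n IH =>
    intro S x y hcard hc
    by_cases hrem : ∃ g ∈ S, G.ConnectsVia (S.erase g) x y
    · obtain ⟨g, hg, hcon⟩ := hrem
      have hpos : 1 ≤ n := hcard ▸ Finset.card_pos.mpr ⟨g, hg⟩
      obtain ⟨P, hP1, hP2, hP3⟩ := IH (n - 1) (by omega) (S.erase g) x y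
        (by rw [Finset.card_erase_of_mem hg, hcard]) hcon
      exact ⟨P, hP1.trans (Finset.erase_subset _ _), hP2, hP3⟩
    · push_neg at hrem
      exact ⟨S, le_refl _, hc, hrem⟩

end UncGraph

namespace UncGraph

variable (G : UncGraph)

/-- the fundamental cycle of a non-tree edge `g`, containing a prescribed
tree edge `m` of the cut crossed by `g`. -/
lemma fund_cycle {T : Finset G.E} (hsp : G.IsSpanningTree T) {g : G.E}
    (hgT : g ∉ T) {m : G.E} (hmT : m ∈ T) (hcut : G.InCut T m g) :
    ∃ C, G.IsCycleOf T g C ∧ m ∈ C := by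
  obtain ⟨x, y, hgxy⟩ := G.ends_rep g
  have hxy : x ≠ y := by
    intro h
    exact hcut x y hgxy (h ▸ G.conn_refl _ _)
  obtain ⟨P, hPT, hPc, hPmin⟩ :=
    G.exists_minimal_connector T.card T x y rfl (hsp.1 x y)
  have hmP : m ∈ P := by
    by_contra hmP
    have hsub : P ⊆ T.erase m := fun e he =>
      Finset.mem_erase.mpr ⟨fun h => hmP (h ▸ he), hPT he⟩
    exact hcut x y hgxy (G.conn_mono hsub hPc)
  obtain ⟨hp1, hp2, hpint, hpsup⟩ :=
    G.minimal_path P.card P x y rfl hxy hPc hPmin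
  have hgP : g ∉ P := fun h => hgT (hPT h)
  refine ⟨insert g P, ⟨⟨⟨g, Finset.mem_insert_self _ _⟩, ?_, ?_⟩,
    Finset.mem_insert_self _ _, Finset.insert_subset_insert _ hPT⟩,
    Finset.mem_insert_of_mem hmP⟩
  · -- degrees
    intro v
    rw [G.incCount_insert hgP, G.tau_eq_one hgxy hxy]
    by_cases hvx : v = x
    · right; rw [if_pos (Or.inl hvx), hvx, hp1]
    · by_cases hvy : v = y
      · right; rw [if_pos (Or.inr hvy), hvy, hp2]
      · rw [if_neg (by tauto)]
        rcases hpint v hvx hvy with h | h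
        · left; simp [h]
        · right; simp [h]
  · -- connectivity of the support
    have hconnx : ∀ v, G.incCount (insert g P) v ≠ 0 →
        G.ConnectsVia (insert g P) x v := by
      intro v hv
      rw [G.incCount_insert hgP, G.tau_eq_one hgxy hxy] at hv
      by_cases hvx : v = x
      · exact hvx ▸ G.conn_refl _ _
      · by_cases hvy : v = y
        · exact hvy ▸ G.conn_mono (Finset.subset_insert _ _) hPc
        · rw [if_neg (by tauto)] at hv
          simp only [Nat.zero_add] at hv
          exact G.conn_mono (Finset.subset_insert _ _) (hpsup v hv)
    intro u v hu hv
    exact G.conn_trans (G.conn_symm (hconnx u hu)) (hconnx v hv)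

/-- removing an edge from a cycle leaves its endpoints connected. -/
lemma cycle_erase_conn {C : Finset G.E} (hC : G.IsCycle C) {e : G.E} {a b : G.V}
    (he : e ∈ C) (hab : G.ends e = s(a, b)) :
    G.ConnectsVia (C.erase e) a b := by
  by_cases hab' : a = b
  · exact hab' ▸ G.conn_refl _ _
  by_contra hnc
  set K : Finset G.V := Finset.univ.filter (fun v => G.ConnectsVia (C.erase e) a v) with hK
  have haK : a ∈ K := by simp [hK]; exact G.conn_refl _ _
  have hbK : b ∉ K := by simp [hK]; exact hnc
  -- the sum of degrees over K w.r.t. C.erase e is even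
  set N := ∑ v ∈ K, G.incCount (C.erase e) v with hN
  have hNeven : 2 ∣ N := by
    have hswap : N = ∑ h ∈ C.erase e, ∑ v ∈ K, G.tau h v := by
      rw [hN]
      simp only [incCount_eq_sum_tau]
      rw [Finset.sum_comm]
    rw [hswap]
    apply Finset.dvd_sum
    intro h hh
    obtain ⟨u, t, hut⟩ := G.ends_rep h
    by_cases hloop : u = t
    · subst hloop
      have : ∀ v ∈ K, G.tau h v = if v = u then 2 else 0 :=
        fun v _ => G.tau_loop hut
      rw [Finset.sum_congr rfl this, Finset.sum_ite_eq' K u (fun _ => 2)]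
      by_cases hu : u ∈ K <;> simp [hu]
    · have htau : ∀ v ∈ K, G.tau h v = if v = u ∨ v = t then 1 else 0 :=
        fun v _ => G.tau_eq_one hut hloop
      rw [Finset.sum_congr rfl htau]
      have hcard : ∑ v ∈ K, (if v = u ∨ v = t then 1 else 0) =
          (K.filter (fun v => v = u ∨ v = t)).card := by
        rw [Finset.card_filter]
      rw [hcard]
      have hiff : u ∈ K ↔ t ∈ K := by
        have hconn : G.ConnectsVia (C.erase e) u t := G.conn_single hh hut
        simp only [hK, Finset.mem_filter, Finset.mem_univ, true_and]
        exact ⟨fun h' => G.conn_trans h' hconn, fun h' => G.conn_trans h' (G.conn_symm hconn)⟩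
      by_cases hu : u ∈ K
      · have ht : t ∈ K := hiff.mp hu
        have : K.filter (fun v => v = u ∨ v = t) = {u, t} := by
          ext v
          simp only [Finset.mem_filter, Finset.mem_insert, Finset.mem_singleton]
          constructor
          · tauto
          · rintro (h' | h') <;> subst h' <;> tauto
        rw [this, Finset.card_pair hloop]
      · have ht : t ∉ K := fun h' => hu (hiff.mpr h')
        have : K.filter (fun v => v = u ∨ v = t) = ∅ := by
          ext v
          simp only [Finset.mem_filter, Finset.notMem_empty, iff_false]
          rintro ⟨hv, h' | h'⟩ <;> subst h' <;> tauto
        rw [this]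
        simp
  -- but the sum differs from the (even) cycle degree sum by exactly 1
  have hsplit : N + ∑ v ∈ K, G.tau e v = ∑ v ∈ K, G.incCount C v := by
    rw [hN, ← Finset.sum_add_distrib]
    apply Finset.sum_congr rfl
    intro v _
    exact G.incCount_erase_add_tau he v
  have hMeven : 2 ∣ ∑ v ∈ K, G.incCount C v := by
    apply Finset.dvd_sum
    intro v _
    rcases hC.2.1 v with h | h <;> simp [h]
  have htone : ∑ v ∈ K, G.tau e v = 1 := by
    have : ∀ v ∈ K, G.tau e v = if v = a ∨ v = b then 1 else 0 :=
      fun v _ => G.tau_eq_one hab hab'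
    rw [Finset.sum_congr rfl this]
    rw [Finset.card_filter (s := K) (p := fun v => v = a ∨ v = b) |>.symm]
    have : K.filter (fun v => v = a ∨ v = b) = {a} := by
      ext v
      simp only [Finset.mem_filter, Finset.mem_singleton]
      constructor
      · rintro ⟨hv, h' | h'⟩
        · exact h'
        · exact absurd (h' ▸ hv) hbK
      · intro h'
        exact ⟨h' ▸ haK, Or.inl h'⟩
    rw [this, Finset.card_singleton]
  omega

/-- a tree edge on the cycle of a non-tree edge `g` lies in the cut crossed by `g`. -/
lemma cyc_to_cut {T : Finset G.E} (hsp : G.IsSpanningTree T) {g : G.E} {C : Finset G.E}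
    (hC : G.IsCycleOf T g C) {e : G.E} (heC : e ∈ C) (heg : e ≠ g) :
    e ∈ T ∧ G.InCut T e g := by
  have heT : e ∈ T := by
    rcases Finset.mem_insert.mp (hC.2.2 heC) with h | h
    · exact absurd h heg
    · exact h
  refine ⟨heT, ?_⟩
  intro u v hguv hconn
  obtain ⟨p, q, hepq⟩ := G.ends_rep e
  have hpq : G.ConnectsVia (C.erase e) p q := G.cycle_erase_conn hC.1 heC hepq
  have hsub : C.erase e ⊆ insert g (T.erase e) := by
    intro h hh
    have h1 := Finset.mem_erase.mp hh
    rcases Finset.mem_insert.mp (hC.2.2 h1.2) with h' | h'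
    · exact h' ▸ Finset.mem_insert_self _ _
    · exact Finset.mem_insert_of_mem (Finset.mem_erase.mpr ⟨h1.1, h'⟩)
  have hpq' : G.ConnectsVia (insert g (T.erase e)) p q := G.conn_mono hsub hpq
  have hguv' : G.ConnectsVia (T.erase e) u v := hconn
  have : G.ConnectsVia (T.erase e) p q := G.conn_insert_elim hguv hguv' hpq'
  exact G.tree_bridge hsp heT hepq this

end UncGraph

namespace UncGraph

variable (G : UncGraph)

/-- an edge that is the strict minimum over a cut belongs to every MST. -/
lemma force_in {wf : G.E → ℝ} {T' : Finset G.E} (hmst : G.IsMST wf T')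
    {l : G.E} {u₀ v₀ : G.V} (hends : G.ends l = s(u₀, v₀))
    (A : G.V → Prop) (hu : A u₀) (hv : ¬ A v₀)
    (hcross : ∀ f, f ≠ l → ∀ x y, G.ends f = s(x, y) → A x → ¬ A y → wf l < wf f) :
    l ∈ T' := by
  by_contra hl
  have hsp' := hmst.1
  obtain ⟨P, hPT', hPc, hPmin⟩ :=
    G.exists_minimal_connector T'.card T' u₀ v₀ rfl (hsp'.1 u₀ v₀)
  obtain ⟨f, hfP, x, y, hfxy, hAx, hAy⟩ := G.conn_cross A hPc hu hv
  have hfT' : f ∈ T' := hPT' hfP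
  have hfl : f ≠ l := fun h => hl (h ▸ hfT')
  have hncut : ¬ G.ConnectsVia (T'.erase f) u₀ v₀ := by
    intro hcon
    have hbr : ¬ G.ConnectsVia (T'.erase f) x y := G.tree_bridge hsp' hfT' hfxy
    have hsub : P.erase f ⊆ T'.erase f := Finset.erase_subset_erase _ hPT'
    rcases G.conn_w hfxy hPc (hPmin f hfP) with ⟨h1, h2⟩ | ⟨h1, h2⟩
    · exact hbr (G.conn_trans (G.conn_symm (G.conn_mono hsub h1))
        (G.conn_trans hcon (G.conn_mono hsub h2)))
    · exact hbr (G.conn_trans (G.conn_symm (G.conn_mono hsub h2))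
        (G.conn_trans (G.conn_symm hcon) (G.conn_mono hsub h1)))
  have hsp'' := G.exchange_spanning hsp' hfT' hl hfxy hends hncut
  have hle := hmst.2 _ hsp''
  rw [G.sum_exchange wf hfT' hl] at hle
  have hlt := hcross f hfl x y hfxy hAx hAy
  linarith

/-- an edge that is the strict maximum on a cycle belongs to no MST. -/
lemma cycle_out {wf : G.E → ℝ} {T' : Finset G.E} (hmst : G.IsMST wf T')
    {C : Finset G.E} {l : G.E} (hC : G.IsCycle C) (hlC : l ∈ C)
    (hmax : ∀ e ∈ C, e ≠ l → wf e < wf l) :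
    l ∉ T' := by
  intro hlT'
  have hsp' := hmst.1
  obtain ⟨a, b, hlab⟩ := G.ends_rep l
  have hbr : ¬ G.ConnectsVia (T'.erase l) a b := G.tree_bridge hsp' hlT' hlab
  have hab := G.cycle_erase_conn hC hlC hlab
  obtain ⟨e, heC, x, y, hexy, hAx, hAy⟩ :=
    G.conn_cross (fun v => G.ConnectsVia (T'.erase l) a v) hab (G.conn_refl _ _) hbr
  have hel : e ≠ l := (Finset.mem_erase.mp heC).1
  have heT' : e ∉ T' := by
    intro heT'
    exact hAy (G.conn_trans hAx (G.conn_single (Finset.mem_erase.mpr ⟨hel, heT'⟩) hexy))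
  have hncut : ¬ G.ConnectsVia (T'.erase l) x y := fun h => hAy (G.conn_trans hAx h)
  have hsp'' := G.exchange_spanning hsp' hlT' heT' hlab hexy hncut
  have hle := hmst.2 _ hsp''
  rw [G.sum_exchange wf hlT' heT'] at hle
  have hlt := hmax e (Finset.mem_of_mem_erase heC) hel
  linarith

/-- a tree edge of an MST is at most any edge of its cut. -/
lemma struct_wf_le {T : Finset G.E} {wf : G.E → ℝ} (hmst : G.IsMST wf T)
    {e f : G.E} (he : e ∈ T) (hcut : G.InCut T e f) (hfe : f ≠ e) :
    f ∉ T ∧ wf e ≤ wf f := by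
  obtain ⟨x, y, hfxy⟩ := G.ends_rep f
  have hncut := hcut x y hfxy
  have hfT : f ∉ T := by
    intro hfT
    exact hncut (G.conn_single (Finset.mem_erase.mpr ⟨hfe, hfT⟩) hfxy)
  obtain ⟨a, b, heab⟩ := G.ends_rep e
  have hsp'' := G.exchange_spanning hmst.1 he hfT heab hfxy hncut
  have hle := hmst.2 _ hsp''
  rw [G.sum_exchange wf he hfT] at hle
  exact ⟨hfT, by linarith⟩

lemma not_in_tree_of_cut {T : Finset G.E} {e f : G.E}
    (hcut : G.InCut T e f) (hfe : f ≠ e) : f ∉ T := by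
  obtain ⟨x, y, hfxy⟩ := G.ends_rep f
  intro hfT
  exact hcut x y hfxy (G.conn_single (Finset.mem_erase.mpr ⟨hfe, hfT⟩) hfxy)

lemma le_of_forall_lt_eps {X Y ε₀ : ℝ} (hε₀ : 0 < ε₀)
    (h : ∀ ε : ℝ, 0 < ε → ε < ε₀ → X ≤ Y + ε) : X ≤ Y := by
  by_contra hxy
  push_neg at hxy
  have h1 : 0 < min (ε₀/2) ((X - Y)/2) := lt_min (by linarith) (by linarith)
  have h2 : min (ε₀/2) ((X - Y)/2) < ε₀ :=
    lt_of_le_of_lt (min_le_left _ _) (by linarith)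
  have h3 := h _ h1 h2
  have h4 : min (ε₀/2) ((X - Y)/2) ≤ (X - Y)/2 := min_le_right _ _
  linarith

/-- structure inequalities from the lower limit tree. -/
lemma structL {T : Finset G.E} (hLT : G.IsLowerLimitTree T)
    {e f : G.E} (he : e ∈ T) (hcut : G.InCut T e f) (hfe : f ≠ e) :
    G.L e ≤ G.L f ∧ (G.TrivialEdge f → ¬ G.TrivialEdge e → G.L e < G.L f) := by
  obtain ⟨ε₀, hε₀, hml⟩ := hLT
  have key : ∀ ε : ℝ, 0 < ε → ε < ε₀ → G.lowerWeight ε e ≤ G.lowerWeight ε f :=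
    fun ε h1 h2 => (G.struct_wf_le (hml ε h1 h2) he hcut hfe).2
  unfold lowerWeight at key
  unfold TrivialEdge
  by_cases hte : G.L e = G.U e <;> by_cases htf : G.L f = G.U f
  · have := key (ε₀/2) (by linarith) (by linarith)
    rw [if_pos hte, if_pos htf] at this
    exact ⟨this, fun _ h => absurd hte h⟩
  · refine ⟨?_, fun h _ => absurd h htf⟩
    apply le_of_forall_lt_eps hε₀
    intro ε h1 h2
    have := key ε h1 h2
    rw [if_pos hte, if_neg htf] at this
    exact this
  · have := key (ε₀/2) (by linarith) (by linarith)
    rw [if_neg hte, if_pos htf] at this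
    constructor
    · linarith
    · intro _ _; linarith
  · have := key (ε₀/2) (by linarith) (by linarith)
    rw [if_neg hte, if_neg htf] at this
    exact ⟨by linarith, fun h => absurd h htf⟩

/-- structure inequalities from the upper limit tree. -/
lemma structU {T : Finset G.E} (hUT : G.IsUpperLimitTree T)
    {e f : G.E} (he : e ∈ T) (hcut : G.InCut T e f) (hfe : f ≠ e) :
    (¬ G.TrivialEdge e → ¬ G.TrivialEdge f → G.U e ≤ G.U f) ∧
    (¬ G.TrivialEdge e → G.TrivialEdge f → G.U e ≤ G.L f) ∧
    (G.TrivialEdge e → ¬ G.TrivialEdge f → G.L e < G.U f) ∧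
    (G.TrivialEdge e → G.TrivialEdge f → G.L e ≤ G.L f) := by
  obtain ⟨ε₀, hε₀, hmu⟩ := hUT
  have key : ∀ ε : ℝ, 0 < ε → ε < ε₀ → G.upperWeight ε e ≤ G.upperWeight ε f :=
    fun ε h1 h2 => (G.struct_wf_le (hmu ε h1 h2) he hcut hfe).2
  unfold upperWeight at key
  unfold TrivialEdge
  refine ⟨?_, ?_, ?_, ?_⟩
  · intro h1 h2
    have := key (ε₀/2) (by linarith) (by linarith)
    rw [if_neg h1, if_neg h2] at this
    linarith
  · intro h1 h2
    apply le_of_forall_lt_eps hε₀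
    intro ε he1 he2
    have := key ε he1 he2
    rw [if_neg h1, if_pos h2] at this
    linarith
  · intro h1 h2
    have := key (ε₀/2) (by linarith) (by linarith)
    rw [if_pos h1, if_neg h2] at this
    linarith
  · intro h1 h2
    have := key (ε₀/2) (by linarith) (by linarith)
    rw [if_pos h1, if_pos h2] at this
    linarith

lemma triv_or_nontriv (e : G.E) : G.TrivialEdge e ∨ G.NontrivialEdge e := by
  rcases lt_or_eq_of_le (G.LU e) with h | h
  · exact Or.inr h
  · exact Or.inl h

lemma nontriv_iff (e : G.E) : G.NontrivialEdge e ↔ ¬ G.TrivialEdge e := by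
  unfold NontrivialEdge TrivialEdge
  constructor
  · intro h h'
    rw [h'] at h
    exact lt_irrefl _ h
  · intro h
    rcases lt_or_eq_of_le (G.LU e) with h' | h'
    · exact h'
    · exact absurd h' h

lemma mem_I_open {e : G.E} {x : ℝ} (h1 : G.L e < x) (h2 : x < G.U e) : x ∈ G.I e :=
  Or.inr ⟨h1, h2⟩

lemma mem_I_bounds {e : G.E} {x : ℝ} (h : x ∈ G.I e) (hnt : G.NontrivialEdge e) :
    G.L e < x ∧ x < G.U e := by
  rcases h with ⟨h1, _⟩ | h
  · rw [(G.nontriv_iff e)] at hnt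
    exact absurd h1 hnt
  · exact h

lemma mem_I_triv {e : G.E} {x : ℝ} (h : x ∈ G.I e) (ht : G.TrivialEdge e) :
    x = G.L e := by
  rcases h with ⟨_, h2⟩ | h
  · exact h2
  · unfold TrivialEdge at ht
    rw [ht] at h
    exact absurd (h.1.trans h.2) (lt_irrefl _)

lemma mem_I_lower {e : G.E} {x : ℝ} (h : x ∈ G.I e) : G.L e ≤ x := by
  rcases G.triv_or_nontriv e with ht | hnt
  · exact (G.mem_I_triv h ht).ge
  · exact (G.mem_I_bounds h hnt).1.le

lemma mem_I_upper {e : G.E} {x : ℝ} (h : x ∈ G.I e) : x ≤ G.U e := by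
  rcases G.triv_or_nontriv e with ht | hnt
  · rw [G.mem_I_triv h ht, ht]
  · exact (G.mem_I_bounds h hnt).2.le

end UncGraph

namespace UncGraph

variable (G : UncGraph)

lemma unique_trees_spanning {T : Finset G.E} (hT : G.UniqueLimitTrees T) :
    G.IsSpanningTree T := by
  obtain ⟨ε₀, hε₀, hml⟩ := hT.1
  exact (hml (ε₀/2) (by linarith) (by linarith)).1

/-- Witness pair lemma, tree-edge case. -/
lemma witness_pair_tree (w : G.E → ℝ) (hw : G.Valid w)
    {T : Finset G.E} (hT : G.UniqueLimitTrees T)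
    {VC : Finset G.E} (hcov : G.IsVCCover T VC)
    {l m : G.E} (hvce : G.VCEdge T m l) (hlT : l ∈ T) (hmVC : m ∉ VC)
    (HYP : ∀ e, e ∈ VC → e ∈ T → G.U l < G.U e →
      ∀ e', G.InCut T e e' → e' ≠ e → w e ≤ G.L e') :
    G.IsWitnessSet w {l, m} := by
  have hsp : G.IsSpanningTree T := G.unique_trees_spanning hT
  intro Q hQ
  by_contra hcon
  push_neg at hcon
  have hlQ : l ∉ Q := hcon l (Finset.mem_insert_self _ _)
  have hmQ : m ∉ Q := hcon m (by simp)
  obtain ⟨T', hver⟩ := hQ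
  obtain ⟨hmT, hlm, hmnt, hlnt, ⟨C, hCyc, hlC⟩, hover⟩ := hvce
  have hlnt' : ¬ G.TrivialEdge l := (G.nontriv_iff l).mp hlnt
  have hmnt' : ¬ G.TrivialEdge m := (G.nontriv_iff m).mp hmnt
  obtain ⟨x₀, hx₀m, hx₀l⟩ := hover
  have hbm := G.mem_I_bounds hx₀m hmnt
  have hbl := G.mem_I_bounds hx₀l hlnt
  have hLmUl : G.L m < G.U l := lt_trans hbm.1 hbl.2
  have hLlUm : G.L l < G.U m := lt_trans hbl.1 hbm.2
  have hInCutlm : G.InCut T l m := (G.cyc_to_cut hsp hCyc hlC hlm).2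
  obtain ⟨p, q, hlpq⟩ := G.ends_rep l
  set A : G.V → Prop := fun v => G.ConnectsVia (T.erase l) p v with hA
  have hAp : A p := G.conn_refl _ _
  have hAq : ¬ A q := G.tree_bridge hsp hlT hlpq
  have hcross_incut : ∀ f x y, G.ends f = s(x, y) → A x → ¬ A y → G.InCut T l f := by
    intro f x y hf hx hy u v huv hconn
    rcases Sym2.eq_iff.mp (huv.symm.trans hf) with ⟨h1, h2⟩ | ⟨h1, h2⟩
    · exact hy (G.conn_trans hx (h1 ▸ h2 ▸ hconn))
    · exact hy (G.conn_trans hx (G.conn_symm (h1 ▸ h2 ▸ hconn)))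
  -- ===== first realization : force l in =====
  set Xcut : Finset G.E := Finset.univ.filter (fun f => G.InCut T l f ∧ f ≠ l) with hXcut
  set β : G.E → ℝ :=
    fun f => if f ∈ Q then w f else if G.TrivialEdge f then G.L f else G.U f with hβ
  set Bset : Finset ℝ := insert (G.U l) (Xcut.image β) with hBset
  have hBne : Bset.Nonempty := Finset.insert_nonempty _ _
  set B : ℝ := Bset.min' hBne with hB
  have hcutL : ∀ f, G.InCut T l f → f ≠ l →
      G.L l ≤ G.L f ∧ (G.TrivialEdge f → G.L l < G.L f) := by
    intro f hc hne
    have s := G.structL hT.1 hlT hc hne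
    exact ⟨s.1, fun ht => s.2 ht hlnt'⟩
  have hLlB : G.L l < B := by
    rw [hB]
    apply (Finset.lt_min'_iff _ _).mpr
    intro r hr
    rcases Finset.mem_insert.mp hr with hr | hr
    · subst hr; exact hlnt
    · obtain ⟨f, hfX, hfr⟩ := Finset.mem_image.mp hr
      obtain ⟨hfc, hfl⟩ := (Finset.mem_filter.mp hfX).2
      subst hfr
      have hs := hcutL f hfc hfl
      simp only [hβ]
      by_cases hfQ : f ∈ Q
      · rw [if_pos hfQ]
        rcases G.triv_or_nontriv f with ht | hnt
        · rw [G.mem_I_triv (hw f) ht]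
          exact hs.2 ht
        · exact lt_of_le_of_lt hs.1 (G.mem_I_bounds (hw f) hnt).1
      · rw [if_neg hfQ]
        by_cases ht : G.TrivialEdge f
        · rw [if_pos ht]; exact hs.2 ht
        · rw [if_neg ht]
          exact lt_of_le_of_lt hs.1 ((G.nontriv_iff f).mpr ht)
  have hBle : ∀ r ∈ Bset, B ≤ r := fun r hr => Finset.min'_le _ _ hr
  set vl : ℝ := (G.L l + B)/2 with hvl
  have hvl1 : G.L l < vl := by rw [hvl]; linarith
  have hvl2 : vl < B := by rw [hvl]; linarith
  have hvlUl : vl < G.U l :=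
    lt_of_lt_of_le hvl2 (hBle _ (Finset.mem_insert_self _ _))
  have hβB : ∀ f, G.InCut T l f → f ≠ l → B ≤ β f := by
    intro f hc hne
    exact hBle _ (Finset.mem_insert_of_mem (Finset.mem_image_of_mem β
      (Finset.mem_filter.mpr ⟨Finset.mem_univ _, hc, hne⟩)))
  set wf1 : G.E → ℝ := fun e =>
    if e = l then vl else if e ∈ Q then w e else if G.TrivialEdge e then G.L e
    else if G.InCut T l e then (max (G.L e) vl + G.U e)/2 else w e with hwf1
  have hwf1l : wf1 l = vl := by simp [hwf1]
  have hcomp1 : G.Compatible w Q wf1 := by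
    constructor
    · intro e heQ
      simp only [hwf1]
      rw [if_neg (fun h : _ = l => hlQ (h ▸ heQ)), if_pos heQ]
    · intro e
      simp only [hwf1]
      by_cases hel : e = l
      · rw [if_pos hel, hel]
        exact G.mem_I_open hvl1 hvlUl
      rw [if_neg hel]
      by_cases heQ : e ∈ Q
      · rw [if_pos heQ]; exact hw e
      rw [if_neg heQ]
      by_cases ht : G.TrivialEdge e
      · rw [if_pos ht]; exact Or.inl ⟨ht, rfl⟩
      rw [if_neg ht]
      by_cases hic : G.InCut T l e
      · rw [if_pos hic]
        have hnt : G.NontrivialEdge e := (G.nontriv_iff e).mpr ht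
        have hUe : vl < G.U e := by
          have := hβB e hic hel
          simp only [hβ] at this
          simp only [if_neg heQ, if_neg ht] at this
          linarith
        have hmax : max (G.L e) vl < G.U e := max_lt hnt hUe
        apply G.mem_I_open
        · have : G.L e ≤ max (G.L e) vl := le_max_left _ _
          linarith
        · linarith
      · rw [if_neg hic]; exact hw e
  have hmst1 := hver wf1 hcomp1
  have hstrict : ∀ f, f ≠ l → ∀ x y, G.ends f = s(x, y) → A x → ¬ A y →
      wf1 l < wf1 f := by
    intro f hne x y hf hx hy
    have hic := hcross_incut f x y hf hx hy
    have hβf := hβB f hic hne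
    rw [hwf1l]; simp only [hwf1]
    rw [if_neg hne]
    by_cases hfQ : f ∈ Q
    · rw [if_pos hfQ]
      simp only [hβ] at hβf
      simp only [if_pos hfQ] at hβf
      linarith
    rw [if_neg hfQ]
    by_cases ht : G.TrivialEdge f
    · rw [if_pos ht]
      simp only [hβ] at hβf
      simp only [if_neg hfQ, if_pos ht] at hβf
      linarith
    · rw [if_neg ht, if_pos hic]
      simp only [hβ] at hβf
      simp only [if_neg hfQ, if_neg ht] at hβf
      have h1 : vl ≤ max (G.L f) vl := le_max_right _ _
      linarith
  have hlT' : l ∈ T' := G.force_in hmst1 hlpq A hAp hAq hstrict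
  -- ===== second realization : force l out =====
  have hmCm : m ∈ C.erase l := Finset.mem_erase.mpr ⟨fun h => hlm h.symm, hCyc.2.1⟩
  set α : G.E → ℝ := fun e => if e ∈ Q then w e else G.L e with hα
  set Mset : Finset ℝ := (C.erase l).image α with hMset
  have hMne : Mset.Nonempty := ⟨α m, Finset.mem_image_of_mem α hmCm⟩
  set M : ℝ := Mset.max' hMne with hM
  have hMlt : M < G.U l := by
    rw [hM]
    apply (Finset.max'_lt_iff _ _).mpr
    intro r hr
    obtain ⟨e, heCm, her⟩ := Finset.mem_image.mp hr
    subst her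
    obtain ⟨hel, heC⟩ := Finset.mem_erase.mp heCm
    by_cases hem : e = m
    · subst hem
      simp only [hα]
      simp only [if_neg hmQ]
      exact hLmUl
    · have heT : e ∈ T := by
        rcases Finset.mem_insert.mp (hCyc.2.2 heC) with h | h
        · exact absurd h hem
        · exact h
      have hicm : G.InCut T e m := (G.cyc_to_cut hsp hCyc heC hem).2
      have hLeLm : G.L e ≤ G.L m :=
        (G.structL hT.1 heT hicm (fun h => hem h.symm)).1
      simp only [hα]
      by_cases heQ : e ∈ Q
      · simp only [if_pos heQ]
        rcases G.triv_or_nontriv e with ht | hnt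
        · rw [G.mem_I_triv (hw e) ht]; linarith
        · -- the interesting case : coverage argument
          by_contra hbad
          push_neg at hbad
          have hweUe := (G.mem_I_bounds (hw e) hnt).2
          have hUlUe : G.U l < G.U e := lt_of_le_of_lt hbad hweUe
          have hLmUe : G.L m < G.U e := by linarith
          set x₁ : ℝ := (G.L m + min (G.U m) (G.U e))/2 with hx₁
          have hx₁m : x₁ ∈ G.I m := by
            apply G.mem_I_open
            · rw [hx₁]
              have := lt_min hmnt hLmUe
              linarith [lt_min hmnt hLmUe]
            · rw [hx₁]
              have h1 : min (G.U m) (G.U e) ≤ G.U m := min_le_left _ _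
              have := lt_min hmnt hLmUe
              linarith
          have hx₁e : x₁ ∈ G.I e := by
            apply G.mem_I_open
            · rw [hx₁]
              have := lt_min hmnt hLmUe
              linarith
            · rw [hx₁]
              have h1 : min (G.U m) (G.U e) ≤ G.U e := min_le_right _ _
              have := lt_min hmnt hLmUe
              linarith
          have hadj : G.VCAdj T m e :=
            Or.inl ⟨hmT, hem, hmnt, hnt, ⟨C, hCyc, heC⟩, ⟨x₁, hx₁m, hx₁e⟩⟩
          have heVC : e ∈ VC := by
            rcases hcov m e hadj with h | h
            · exact absurd h hmVC
            · exact h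
          have := HYP e heVC heT hUlUe m hicm (fun h => hem h.symm)
          linarith
      · simp only [if_neg heQ]
        linarith
  have hMge : ∀ e ∈ C.erase l, α e ≤ M :=
    fun e he => Finset.le_max' _ _ (Finset.mem_image_of_mem α he)
  set vL : ℝ := (max M (G.L l) + G.U l)/2 with hvL
  have hmaxlt : max M (G.L l) < G.U l := max_lt hMlt hlnt
  have hvL1 : M < vL := by
    have : M ≤ max M (G.L l) := le_max_left _ _
    rw [hvL]; linarith
  have hvL2 : G.L l < vL := by
    have : G.L l ≤ max M (G.L l) := le_max_right _ _
    rw [hvL]; linarith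
  have hvL3 : vL < G.U l := by rw [hvL]; linarith
  have hLmvL : G.L m < vL := by
    have := hMge m hmCm
    simp only [hα] at this
    simp only [if_neg hmQ] at this
    linarith
  set vm : ℝ := (G.L m + min (G.U m) vL)/2 with hvm
  have hminm : G.L m < min (G.U m) vL := lt_min hmnt hLmvL
  have hvm1 : G.L m < vm := by rw [hvm]; linarith
  have hvm2 : vm < min (G.U m) vL := by rw [hvm]; linarith
  set wf2 : G.E → ℝ := fun e =>
    if e = l then vL else if e ∈ Q then w e else if e = m then vm
    else if e ∈ C ∧ ¬ G.TrivialEdge e then (G.L e + min (G.U e) vL)/2 else w e with hwf2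
  have hwf2l : wf2 l = vL := by simp [hwf2]
  have hcomp2 : G.Compatible w Q wf2 := by
    constructor
    · intro e heQ
      simp only [hwf2]
      rw [if_neg (fun h : _ = l => hlQ (h ▸ heQ)), if_pos heQ]
    · intro e
      simp only [hwf2]
      by_cases hel : e = l
      · rw [if_pos hel, hel]
        exact G.mem_I_open hvL2 hvL3
      rw [if_neg hel]
      by_cases heQ : e ∈ Q
      · rw [if_pos heQ]; exact hw e
      rw [if_neg heQ]
      by_cases hem : e = m
      · rw [if_pos hem, hem]
        apply G.mem_I_open hvm1
        exact lt_of_lt_of_le hvm2 (min_le_left _ _)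
      rw [if_neg hem]
      by_cases hbr : e ∈ C ∧ ¬ G.TrivialEdge e
      · rw [if_pos hbr]
        have hnt : G.NontrivialEdge e := (G.nontriv_iff e).mpr hbr.2
        have hLevL : G.L e < vL := by
          have := hMge e (Finset.mem_erase.mpr ⟨hel, hbr.1⟩)
          simp only [hα] at this
          simp only [if_neg heQ] at this
          linarith
        have hmin : G.L e < min (G.U e) vL := lt_min hnt hLevL
        apply G.mem_I_open
        · linarith
        · have : min (G.U e) vL ≤ G.U e := min_le_left _ _
          linarith
      · rw [if_neg hbr]; exact hw e
  have hmst2 := hver wf2 hcomp2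
  have hmax2 : ∀ e ∈ C, e ≠ l → wf2 e < wf2 l := by
    intro e heC hel
    rw [hwf2l]; simp only [hwf2]
    rw [if_neg hel]
    have heCm : e ∈ C.erase l := Finset.mem_erase.mpr ⟨hel, heC⟩
    by_cases heQ : e ∈ Q
    · rw [if_pos heQ]
      have := hMge e heCm
      simp only [hα] at this
      simp only [if_pos heQ] at this
      linarith
    rw [if_neg heQ]
    by_cases hem : e = m
    · rw [if_pos hem]
      exact lt_of_lt_of_le hvm2 (min_le_right _ _)
    rw [if_neg hem]
    by_cases ht : G.TrivialEdge e
    · rw [if_neg (fun h : e ∈ C ∧ ¬ G.TrivialEdge e => h.2 ht)]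
      rw [G.mem_I_triv (hw e) ht]
      have := hMge e heCm
      simp only [hα] at this
      simp only [if_neg heQ] at this
      linarith
    · rw [if_pos ⟨heC, ht⟩]
      have hnt : G.NontrivialEdge e := (G.nontriv_iff e).mpr ht
      have hLevL : G.L e < vL := by
        have := hMge e heCm
        simp only [hα] at this
        simp only [if_neg heQ] at this
        linarith
      have hmin : G.L e < min (G.U e) vL := lt_min hnt hLevL
      have : min (G.U e) vL ≤ vL := min_le_right _ _
      linarith
  exact (G.cycle_out hmst2 hCyc.1 hlC hmax2) hlT'

end UncGraph

namespace UncGraph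

variable (G : UncGraph)

/-- Witness pair lemma, non-tree-edge case. -/
lemma witness_pair_nontree (w : G.E → ℝ) (hw : G.Valid w)
    {T : Finset G.E} (hT : G.UniqueLimitTrees T)
    {VC : Finset G.E} (hcov : G.IsVCCover T VC)
    {f m : G.E} (hvce : G.VCEdge T f m) (hmVC : m ∉ VC)
    (HYP : ∀ e, e ∈ VC → e ∉ T → G.L e < G.L f →
      ∀ C', G.IsCycleOf T e C' → ∀ e'' ∈ C', e'' ≠ e → G.U e'' ≤ w e) :
    G.IsWitnessSet w {f, m} := by
  have hsp : G.IsSpanningTree T := G.unique_trees_spanning hT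
  intro Q hQ
  by_contra hcon
  push_neg at hcon
  have hfQ : f ∉ Q := hcon f (Finset.mem_insert_self _ _)
  have hmQ : m ∉ Q := hcon m (by simp)
  obtain ⟨T', hver⟩ := hQ
  obtain ⟨hfT, hmf, hfnt, hmnt, ⟨C, hCyc, hmC⟩, hover⟩ := hvce
  have hfnt' : ¬ G.TrivialEdge f := (G.nontriv_iff f).mp hfnt
  have hmnt' : ¬ G.TrivialEdge m := (G.nontriv_iff m).mp hmnt
  obtain ⟨x₀, hx₀f, hx₀m⟩ := hover
  have hbf := G.mem_I_bounds hx₀f hfnt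
  have hbm := G.mem_I_bounds hx₀m hmnt
  have hLfUm : G.L f < G.U m := lt_trans hbf.1 hbm.2
  have hLmUf : G.L m < G.U f := lt_trans hbm.1 hbf.2
  have hfC : f ∈ C := hCyc.2.1
  obtain ⟨hmT, hicmf⟩ := G.cyc_to_cut hsp hCyc hmC hmf
  -- ===== first realization : force f out of the MST (max on its cycle) =====
  have hfCm : ∀ e ∈ C.erase f, e ∈ T := by
    intro e he
    obtain ⟨hef, heC⟩ := Finset.mem_erase.mp he
    rcases Finset.mem_insert.mp (hCyc.2.2 heC) with h | h
    · exact absurd h hef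
    · exact h
  set α : G.E → ℝ := fun e => if e ∈ Q then w e else G.L e with hα
  have hmCm : m ∈ C.erase f := Finset.mem_erase.mpr ⟨hmf, hmC⟩
  set Mset : Finset ℝ := (C.erase f).image α with hMset
  have hMne : Mset.Nonempty := ⟨α m, Finset.mem_image_of_mem α hmCm⟩
  set M : ℝ := Mset.max' hMne with hM
  have hMlt : M < G.U f := by
    rw [hM]
    apply (Finset.max'_lt_iff _ _).mpr
    intro r hr
    obtain ⟨e, heCm, her⟩ := Finset.mem_image.mp hr
    subst her
    obtain ⟨hef, heC⟩ := Finset.mem_erase.mp heCm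
    have heT : e ∈ T := hfCm e heCm
    have hicef : G.InCut T e f := (G.cyc_to_cut hsp hCyc heC hef).2
    have su := G.structU hT.2.1 heT hicef (fun h => hef h.symm)
    simp only [hα]
    rcases G.triv_or_nontriv e with ht | hnt
    · have hLeUf : G.L e < G.U f := su.2.2.1 ht hfnt'
      by_cases heQ : e ∈ Q
      · rw [if_pos heQ, G.mem_I_triv (hw e) ht]; exact hLeUf
      · rw [if_neg heQ]; exact hLeUf
    · have hUeUf : G.U e ≤ G.U f := su.1 ((G.nontriv_iff e).mp hnt) hfnt'
      by_cases heQ : e ∈ Q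
      · rw [if_pos heQ]
        have := (G.mem_I_bounds (hw e) hnt).2
        linarith
      · rw [if_neg heQ]
        have : G.L e < G.U e := hnt
        linarith
  have hMge : ∀ e ∈ C.erase f, α e ≤ M :=
    fun e he => Finset.le_max' _ _ (Finset.mem_image_of_mem α he)
  set vf : ℝ := (max M (G.L f) + G.U f)/2 with hvf
  have hmaxlt : max M (G.L f) < G.U f := max_lt hMlt hfnt
  have hvf1 : M < vf := by
    have : M ≤ max M (G.L f) := le_max_left _ _
    rw [hvf]; linarith
  have hvf2 : G.L f < vf := by
    have : G.L f ≤ max M (G.L f) := le_max_right _ _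
    rw [hvf]; linarith
  have hvf3 : vf < G.U f := by rw [hvf]; linarith
  set wf1 : G.E → ℝ := fun e =>
    if e = f then vf else if e ∈ Q then w e
    else if e ∈ C ∧ ¬ G.TrivialEdge e then (G.L e + min (G.U e) vf)/2 else w e with hwf1
  have hwf1f : wf1 f = vf := by simp [hwf1]
  have hcomp1 : G.Compatible w Q wf1 := by
    constructor
    · intro e heQ
      simp only [hwf1]
      rw [if_neg (fun h : _ = f => hfQ (h ▸ heQ)), if_pos heQ]
    · intro e
      simp only [hwf1]
      by_cases hef : e = f
      · rw [if_pos hef, hef]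
        exact G.mem_I_open hvf2 hvf3
      rw [if_neg hef]
      by_cases heQ : e ∈ Q
      · rw [if_pos heQ]; exact hw e
      rw [if_neg heQ]
      by_cases hbr : e ∈ C ∧ ¬ G.TrivialEdge e
      · rw [if_pos hbr]
        have hnt : G.NontrivialEdge e := (G.nontriv_iff e).mpr hbr.2
        have hLevf : G.L e < vf := by
          have := hMge e (Finset.mem_erase.mpr ⟨hef, hbr.1⟩)
          simp only [hα, if_neg heQ] at this
          linarith
        have hmin : G.L e < min (G.U e) vf := lt_min hnt hLevf
        apply G.mem_I_open
        · linarith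
        · have : min (G.U e) vf ≤ G.U e := min_le_left _ _
          linarith
      · rw [if_neg hbr]; exact hw e
  have hmst1 := hver wf1 hcomp1
  have hmax1 : ∀ e ∈ C, e ≠ f → wf1 e < wf1 f := by
    intro e heC hef
    rw [hwf1f]; simp only [hwf1]
    rw [if_neg hef]
    have heCm : e ∈ C.erase f := Finset.mem_erase.mpr ⟨hef, heC⟩
    by_cases heQ : e ∈ Q
    · rw [if_pos heQ]
      have := hMge e heCm
      simp only [hα, if_pos heQ] at this
      linarith
    rw [if_neg heQ]
    by_cases ht : G.TrivialEdge e
    · rw [if_neg (fun h : e ∈ C ∧ ¬ G.TrivialEdge e => h.2 ht)]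
      rw [G.mem_I_triv (hw e) ht]
      have := hMge e heCm
      simp only [hα, if_neg heQ] at this
      linarith
    · rw [if_pos ⟨heC, ht⟩]
      have hnt : G.NontrivialEdge e := (G.nontriv_iff e).mpr ht
      have hLevf : G.L e < vf := by
        have := hMge e heCm
        simp only [hα, if_neg heQ] at this
        linarith
      have hmin : G.L e < min (G.U e) vf := lt_min hnt hLevf
      have : min (G.U e) vf ≤ vf := min_le_right _ _
      linarith
  have hfnotT' : f ∉ T' := G.cycle_out hmst1 hCyc.1 hfC hmax1
  -- ===== second realization : force f into the MST (min on the cut of m) =====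
  obtain ⟨p, q, hmpq⟩ := G.ends_rep m
  set A : G.V → Prop := fun v => G.ConnectsVia (T.erase m) p v with hA
  have hAp : A p := G.conn_refl _ _
  have hAq : ¬ A q := G.tree_bridge hsp hmT hmpq
  have hcross_incut : ∀ g x y, G.ends g = s(x, y) → A x → ¬ A y → G.InCut T m g := by
    intro g x y hg hx hy u v huv hconn
    rcases Sym2.eq_iff.mp (huv.symm.trans hg) with ⟨h1, h2⟩ | ⟨h1, h2⟩
    · exact hy (G.conn_trans hx (h1 ▸ h2 ▸ hconn))
    · exact hy (G.conn_trans hx (G.conn_symm (h1 ▸ h2 ▸ hconn)))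
  set Xm : Finset G.E :=
    Finset.univ.filter (fun e => G.InCut T m e ∧ e ≠ m ∧ e ≠ f) with hXm
  set β : G.E → ℝ :=
    fun e => if e ∈ Q then w e else if G.TrivialEdge e then G.L e else G.U e with hβ
  set Bset : Finset ℝ := insert (G.U f) (insert (G.U m) (Xm.image β)) with hBset
  have hBne : Bset.Nonempty := Finset.insert_nonempty _ _
  set B : ℝ := Bset.min' hBne with hB
  have hLfB : G.L f < B := by
    rw [hB]
    apply (Finset.lt_min'_iff _ _).mpr
    intro r hr
    rcases Finset.mem_insert.mp hr with hr | hr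
    · subst hr; exact hfnt
    rcases Finset.mem_insert.mp hr with hr | hr
    · subst hr; exact hLfUm
    obtain ⟨e, heX, her⟩ := Finset.mem_image.mp hr
    subst her
    obtain ⟨hice, hem, hef⟩ := (Finset.mem_filter.mp heX).2
    have heT : e ∉ T := G.not_in_tree_of_cut hice hem
    have su := G.structU hT.2.1 hmT hice hem
    simp only [hβ]
    rcases G.triv_or_nontriv e with ht | hnt
    · have hUmLe : G.U m ≤ G.L e := su.2.1 hmnt' ht
      by_cases heQ : e ∈ Q
      · rw [if_pos heQ, G.mem_I_triv (hw e) ht]; linarith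
      · rw [if_neg heQ, if_pos ht]; linarith
    · have hUmUe : G.U m ≤ G.U e := su.1 hmnt' ((G.nontriv_iff e).mp hnt)
      by_cases heQ : e ∈ Q
      · rw [if_pos heQ]
        -- the interesting case : coverage argument
        by_contra hbad
        push_neg at hbad
        have hbe := G.mem_I_bounds (hw e) hnt
        have hLeLf : G.L e < G.L f := lt_of_lt_of_le hbe.1 hbad
        have hLeUm : G.L e < G.U m := by linarith
        obtain ⟨C', hC', hmC'⟩ := G.fund_cycle hsp heT hmT hice
        set x₂ : ℝ := (G.L e + G.U m)/2 with hx₂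
        have hLmLe : G.L m ≤ G.L e := (G.structL hT.1 hmT hice hem).1
        have hx₂e : x₂ ∈ G.I e := by
          apply G.mem_I_open
          · rw [hx₂]; linarith
          · rw [hx₂]; linarith
        have hx₂m : x₂ ∈ G.I m := by
          apply G.mem_I_open
          · rw [hx₂]; linarith
          · rw [hx₂]; linarith
        have hmne : m ≠ e := fun h => heT (h ▸ hmT)
        have hadj : G.VCAdj T e m :=
          Or.inl ⟨heT, hmne, hnt, hmnt, ⟨C', hC', hmC'⟩, ⟨x₂, hx₂e, hx₂m⟩⟩
        have heVC : e ∈ VC := by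
          rcases hcov e m hadj with h | h
          · exact h
          · exact absurd h hmVC
        have := HYP e heVC heT hLeLf C' hC' m hmC' hmne
        linarith
      · rw [if_neg heQ, if_neg ((G.nontriv_iff e).mp hnt)]
        linarith
  have hBle : ∀ r ∈ Bset, B ≤ r := fun r hr => Finset.min'_le _ _ hr
  have hBUf : B ≤ G.U f := hBle _ (Finset.mem_insert_self _ _)
  have hBUm : B ≤ G.U m :=
    hBle _ (Finset.mem_insert_of_mem (Finset.mem_insert_self _ _))
  have hβB : ∀ e, G.InCut T m e → e ≠ m → e ≠ f → B ≤ β e := by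
    intro e h1 h2 h3
    exact hBle _ (Finset.mem_insert_of_mem (Finset.mem_insert_of_mem
      (Finset.mem_image_of_mem β (Finset.mem_filter.mpr ⟨Finset.mem_univ _, h1, h2, h3⟩))))
  set vf2 : ℝ := (G.L f + B)/2 with hvf2
  have hvf2a : G.L f < vf2 := by rw [hvf2]; linarith
  have hvf2b : vf2 < B := by rw [hvf2]; linarith
  have hvf2Uf : vf2 < G.U f := lt_of_lt_of_le hvf2b hBUf
  have hvf2Um : vf2 < G.U m := lt_of_lt_of_le hvf2b hBUm
  set wf2 : G.E → ℝ := fun e =>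
    if e = f then vf2 else if e ∈ Q then w e
    else if e = m then (max (G.L m) vf2 + G.U m)/2
    else if G.InCut T m e ∧ ¬ G.TrivialEdge e then (max (G.L e) vf2 + G.U e)/2
    else w e with hwf2
  have hwf2f : wf2 f = vf2 := by simp [hwf2]
  have hcomp2 : G.Compatible w Q wf2 := by
    constructor
    · intro e heQ
      simp only [hwf2]
      rw [if_neg (fun h : _ = f => hfQ (h ▸ heQ)), if_pos heQ]
    · intro e
      simp only [hwf2]
      by_cases hef : e = f
      · rw [if_pos hef, hef]
        exact G.mem_I_open hvf2a hvf2Uf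
      rw [if_neg hef]
      by_cases heQ : e ∈ Q
      · rw [if_pos heQ]; exact hw e
      rw [if_neg heQ]
      by_cases hem : e = m
      · rw [if_pos hem, hem]
        have hmax : max (G.L m) vf2 < G.U m := max_lt hmnt hvf2Um
        apply G.mem_I_open
        · have : G.L m ≤ max (G.L m) vf2 := le_max_left _ _
          linarith
        · linarith
      rw [if_neg hem]
      by_cases hbr : G.InCut T m e ∧ ¬ G.TrivialEdge e
      · rw [if_pos hbr]
        have hnt : G.NontrivialEdge e := (G.nontriv_iff e).mpr hbr.2
        have hUe : vf2 < G.U e := by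
          have := hβB e hbr.1 hem hef
          simp only [hβ, if_neg heQ, if_neg hbr.2] at this
          linarith
        have hmax : max (G.L e) vf2 < G.U e := max_lt hnt hUe
        apply G.mem_I_open
        · have : G.L e ≤ max (G.L e) vf2 := le_max_left _ _
          linarith
        · linarith
      · rw [if_neg hbr]; exact hw e
  have hmst2 := hver wf2 hcomp2
  have hstrict : ∀ g, g ≠ f → ∀ x y, G.ends g = s(x, y) → A x → ¬ A y →
      wf2 f < wf2 g := by
    intro g hgf x y hg hx hy
    have hic := hcross_incut g x y hg hx hy
    rw [hwf2f]; simp only [hwf2]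
    rw [if_neg hgf]
    by_cases hgQ : g ∈ Q
    · rw [if_pos hgQ]
      have hgm : g ≠ m := fun h => hmQ (h ▸ hgQ)
      have := hβB g hic hgm hgf
      simp only [hβ, if_pos hgQ] at this
      linarith
    rw [if_neg hgQ]
    by_cases hgm : g = m
    · rw [if_pos hgm]
      have hmax : max (G.L m) vf2 < G.U m := max_lt hmnt hvf2Um
      have : vf2 ≤ max (G.L m) vf2 := le_max_right _ _
      linarith
    rw [if_neg hgm]
    by_cases ht : G.TrivialEdge g
    · rw [if_neg (fun h : G.InCut T m g ∧ ¬ G.TrivialEdge g => h.2 ht)]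
      rw [G.mem_I_triv (hw g) ht]
      have := hβB g hic hgm hgf
      simp only [hβ, if_neg hgQ, if_pos ht] at this
      linarith
    · rw [if_pos ⟨hic, ht⟩]
      have hnt : G.NontrivialEdge g := (G.nontriv_iff g).mpr ht
      have hUg : vf2 < G.U g := by
        have := hβB g hic hgm hgf
        simp only [hβ, if_neg hgQ, if_neg ht] at this
        linarith
      have : vf2 ≤ max (G.L g) vf2 := le_max_right _ _
      linarith
  -- f crosses the cut of m
  obtain ⟨xf, yf, hfxy⟩ := G.ends_rep f
  have hfcross : ¬ G.ConnectsVia (T.erase m) xf yf := hicmf xf yf hfxy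
  have hside : ∀ v, A v ∨ G.ConnectsVia (T.erase m) v q := by
    intro v
    rcases G.conn_erase_endpoint hmpq (hsp.1 v p) with h | h
    · exact Or.inl (G.conn_symm h)
    · exact Or.inr h
  have hfT' : f ∈ T' := by
    rcases hside xf with hxA | hxq <;> rcases hside yf with hyA | hyq
    · exact absurd (G.conn_trans (G.conn_symm hxA) hyA) hfcross
    · have hyA : ¬ A yf := by
        intro h
        have hq : G.ConnectsVia (T.erase m) p q := G.conn_trans h (hyq)
        exact hAq hq
      exact G.force_in hmst2 hfxy A hxA hyA hstrict
    · have hxA' : ¬ A xf := by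
        intro h
        exact hAq (G.conn_trans h hxq)
      exact G.force_in hmst2 (hfxy.trans (Sym2.eq_swap)) A hyA hxA' hstrict
    · exact absurd (G.conn_trans hxq (G.conn_symm hyq)) hfcross
  exact hfnotT' hfT'

end UncGraph

/-- witness pairs from a minimum vertex cover and matching:
in a prediction mandatory free instance with unique `T_L = T_U`, given a minimum
vertex cover `VC` of the vertex cover instance and a matching `h` assigning to
each `e ∈ VC` a distinct partner `h e ∉ VC`, for the edges of `VC ∩ T_L` ordered
by non-increasing upper limit, if the true value of each of the first `d` edges
is minimal in its cut, then `{l'_i, h(l'_i)}` is a witness set for all `i ≤ d`;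
symmetrically for the edges of `VC ∖ T_L` ordered by non-decreasing lower limit
that are maximal on their cycles. -/
theorem vc_matching_witness_sets
    (G : UncGraph) (w : G.E → ℝ) (hw : G.Valid w)
    (hPMF : G.PredMandatoryFree)
    (T : Finset G.E) (hT : G.UniqueLimitTrees T)
    (VC : Finset G.E) (hVC : G.IsMinVC T VC)
    (h : G.E → G.E)
    (hmatch : ∀ e ∈ VC, G.VCAdj T e (h e) ∧ h e ∉ VC)
    (hinj : Set.InjOn h ↑VC) :
    (∀ (k : ℕ) (l' : Fin k → G.E), Function.Injective l' →
      (∀ i, l' i ∈ VC ∩ T) → (∀ e ∈ VC ∩ T, ∃ i, l' i = e) →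
      (∀ i j : Fin k, i ≤ j → G.U (l' j) ≤ G.U (l' i)) →
      ∀ d : ℕ,
        (∀ i : Fin k, (i : ℕ) < d →
          ∀ e', G.InCut T (l' i) e' → e' ≠ l' i → w (l' i) ≤ G.L e') →
        ∀ i : Fin k, (i : ℕ) ≤ d → G.IsWitnessSet w {l' i, h (l' i)}) ∧
    (∀ (g : ℕ) (f' : Fin g → G.E), Function.Injective f' →
      (∀ i, f' i ∈ VC \ T) → (∀ e ∈ VC \ T, ∃ i, f' i = e) →
      (∀ i j : Fin g, i ≤ j → G.L (f' i) ≤ G.L (f' j)) →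
      ∀ b : ℕ,
        (∀ i : Fin g, (i : ℕ) < b →
          ∀ C, G.IsCycleOf T (f' i) C → ∀ e ∈ C, e ≠ f' i → G.U e ≤ w (f' i)) →
        ∀ i : Fin g, (i : ℕ) ≤ b → G.IsWitnessSet w {f' i, h (f' i)}) := by
  constructor
  · intro k l' hinj' hmem hsurj hord d hd i hid
    have hli := hmem i
    have hliVC : l' i ∈ VC := (Finset.mem_inter.mp hli).1
    have hliT : l' i ∈ T := (Finset.mem_inter.mp hli).2
    obtain ⟨hadj, hhVC⟩ := hmatch (l' i) hliVC
    have hvce : G.VCEdge T (h (l' i)) (l' i) := by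
      rcases hadj with hv | hv
      · exact absurd hliT hv.1
      · exact hv
    apply G.witness_pair_tree w hw hT hVC.1 hvce hliT hhVC
    intro e heVC heT hUlt e' hic hne
    obtain ⟨j, hj⟩ := hsurj e (Finset.mem_inter.mpr ⟨heVC, heT⟩)
    have hji : j < i := by
      by_contra hle
      push_neg at hle
      have := hord i j hle
      rw [hj] at this
      linarith
    have hjd : (j : ℕ) < d := by
      have : (j : ℕ) < (i : ℕ) := hji
      omega
    have hres := hd j hjd e' (by rw [hj]; exact hic) (by rw [hj]; exact hne)
    rwa [hj] at hres
  · intro g f' hinj' hmem hsurj hord b hb i hib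
    have hfi := hmem i
    have hfiVC : f' i ∈ VC := (Finset.mem_sdiff.mp hfi).1
    have hfiT : f' i ∉ T := (Finset.mem_sdiff.mp hfi).2
    obtain ⟨hadj, hhVC⟩ := hmatch (f' i) hfiVC
    have hvce : G.VCEdge T (f' i) (h (f' i)) := by
      rcases hadj with hv | hv
      · exact hv
      · obtain ⟨_, hne, _, _, ⟨C, hC, hfC⟩, _⟩ := hv
        rcases Finset.mem_insert.mp (hC.2.2 hfC) with h' | h'
        · exact absurd h' hne
        · exact absurd h' hfiT
    apply G.witness_pair_nontree w hw hT hVC.1 hvce hhVC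
    intro e heVC heT hLlt C' hC' e'' he'' hne
    obtain ⟨j, hj⟩ := hsurj e (Finset.mem_sdiff.mpr ⟨heVC, heT⟩)
    have hji : j < i := by
      by_contra hle
      push_neg at hle
      have := hord i j hle
      rw [hj] at this
      linarith
    have hjb : (j : ℕ) < b := by
      have : (j : ℕ) < (i : ℕ) := hji
      omega
    have hres := hb j hjb C' (by rw [hj]; exact hC') e'' he'' (by rw [hj]; exact hne)
    rwa [hj] at hres
end
end

section
/- Consider an instance of the MST problem under explorable uncertainty with unique T_L = T_U. Let Q be a feasible query set verifying an MST T*, let P ⊆ T_L be a path between two vertices a and b, and let e ∈ P be the edge with the highest upper limit on P. If e ∉ Q, then the unique path P̂ from a to b in T* contains e, and after querying Q the edge e has the highest upper limit on P̂. -/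
/-!
Common framework: the minimum spanning tree problem under explorable
uncertainty with (untrusted) predictions.
-/

open scoped BigOperators
open scoped Classical

noncomputable section

/-! ### Auxiliary lemmas for the proof -/

namespace MSTAux

open UncGraph Finset

variable (G : UncGraph)

local notation "Conn" => G.ConnectsVia

lemma conn_refl (S : Finset G.E) (u : G.V) : Conn S u u := Relation.ReflTransGen.refl

lemma conn_mono {S S' : Finset G.E} (h : S ⊆ S') {u v : G.V} (hc : Conn S u v) :
    Conn S' u v := by
  induction hc with
  | refl => exact Relation.ReflTransGen.refl
  | tail _ hstep ih =>
    obtain ⟨g, hg, hge⟩ := hstep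
    exact ih.tail ⟨g, h hg, hge⟩

lemma conn_symm {S : Finset G.E} {u v : G.V} (hc : Conn S u v) : Conn S v u := by
  refine @Std.Symm.symm _ _ (@Relation.ReflTransGen.stdSymm _ _ ⟨?_⟩) _ _ hc
  intro x y ⟨g, hg, hge⟩
  exact ⟨g, hg, by rwa [Sym2.eq_swap]⟩

lemma conn_trans {S : Finset G.E} {u v x : G.V} (h1 : Conn S u v) (h2 : Conn S v x) :
    Conn S u x := h1.trans h2

lemma conn_single {S : Finset G.E} {g : G.E} (hg : g ∈ S) {x y : G.V}
    (hge : G.ends g = s(x, y)) : Conn S x y :=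
  Relation.ReflTransGen.single ⟨g, hg, hge⟩

lemma conn_empty {u v : G.V} (hc : Conn (∅ : Finset G.E) u v) : u = v := by
  induction hc with
  | refl => rfl
  | tail _ hstep ih => obtain ⟨g, hg, _⟩ := hstep; exact absurd hg (by simp)

/-- G1: transfer a walk along edges whose endpoints are connected in `X`. -/
lemma conn_transfer {W X : Finset G.E} {p q : G.V}
    (h : ∀ g ∈ W, ∀ x y : G.V, G.ends g = s(x, y) → Conn X x y)
    (hc : Conn W p q) : Conn X p q := by
  induction hc with
  | refl => exact Relation.ReflTransGen.refl
  | tail _ hstep ih =>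
    obtain ⟨g, hg, hge⟩ := hstep
    exact conn_trans G ih (h g hg _ _ hge)

/-- G2: decomposition of connectivity after inserting one edge. -/
lemma conn_insert_cases {S : Finset G.E} {r : G.E} {u v p q : G.V}
    (hre : G.ends r = s(u, v)) (hc : Conn (insert r S) p q) :
    Conn S p q ∨ (Conn S p u ∧ Conn S v q) ∨ (Conn S p v ∧ Conn S u q) := by
  induction hc with
  | refl => exact Or.inl Relation.ReflTransGen.refl
  | @tail c q hcc hstep ih =>
    obtain ⟨g, hg, hge⟩ := hstep
    rcases Finset.mem_insert.mp hg with hgr | hgS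
    · subst hgr
      rw [hre] at hge
      have hcq : (c = u ∧ q = v) ∨ (c = v ∧ q = u) := by
        rw [Sym2.eq_iff] at hge
        tauto
      rcases hcq with ⟨rfl, rfl⟩ | ⟨rfl, rfl⟩
      · rcases ih with h1 | ⟨h2a, h2b⟩ | ⟨h3a, h3b⟩
        · exact Or.inr (Or.inl ⟨h1, conn_refl G S _⟩)
        · exact Or.inr (Or.inl ⟨h2a, conn_refl G S _⟩)
        · exact Or.inl h3a
      · rcases ih with h1 | ⟨h2a, h2b⟩ | ⟨h3a, h3b⟩
        · exact Or.inr (Or.inr ⟨h1, conn_refl G S _⟩)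
        · exact Or.inl h2a
        · exact Or.inr (Or.inr ⟨h3a, conn_refl G S _⟩)
    · rcases ih with h1 | ⟨h2a, h2b⟩ | ⟨h3a, h3b⟩
      · exact Or.inl (h1.tail ⟨g, hgS, hge⟩)
      · exact Or.inr (Or.inl ⟨h2a, h2b.tail ⟨g, hgS, hge⟩⟩)
      · exact Or.inr (Or.inr ⟨h3a, h3b.tail ⟨g, hgS, hge⟩⟩)

end MSTAux

namespace MSTAux
variable (G : UncGraph)
local notation "Conn" => G.ConnectsVia

/-- The connected component (class) of `v` w.r.t. edge set `S`. -/
noncomputable def cls (S : Finset G.E) (v : G.V) : Finset G.V :=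
  Finset.univ.filter (fun x => Conn S v x)

lemma mem_cls {S : Finset G.E} {v x : G.V} : x ∈ cls G S v ↔ Conn S v x := by
  simp [cls]

lemma self_mem_cls {S : Finset G.E} (v : G.V) : v ∈ cls G S v :=
  (mem_cls G).mpr (conn_refl G S v)

lemma cls_eq_of_conn {S : Finset G.E} {u v : G.V} (h : Conn S u v) :
    cls G S u = cls G S v := by
  ext x
  simp only [mem_cls]
  exact ⟨fun h2 => conn_trans G (conn_symm G h) h2, fun h2 => conn_trans G h h2⟩

lemma conn_of_cls_eq {S : Finset G.E} {u v : G.V} (h : cls G S u = cls G S v) :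
    Conn S u v := by
  have := self_mem_cls G (S := S) v
  rw [← h, mem_cls] at this
  exact this

/-- Number of connected components. -/
noncomputable def ncomp (S : Finset G.E) : ℕ :=
  (Finset.univ.image (cls G S)).card

lemma ncomp_empty : ncomp G (∅ : Finset G.E) = Fintype.card G.V := by
  have h : ∀ v : G.V, cls G (∅ : Finset G.E) v = {v} := by
    intro v
    ext x
    simp only [mem_cls, Finset.mem_singleton]
    constructor
    · intro h2; exact (conn_empty G h2).symm
    · rintro rfl; exact conn_refl G _ _
  unfold ncomp
  rw [Finset.image_congr (fun v _ => h v)]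
  rw [Finset.card_image_of_injective _ (fun x y hxy => Finset.singleton_injective hxy)]
  simp

/-- If the endpoints of `g` are already connected in `S`, inserting `g` does not
change connectivity. -/
lemma conn_insert_of_redundant {S : Finset G.E} {g : G.E} {u v : G.V}
    (hge : G.ends g = s(u, v)) (huv : Conn S u v) {p q : G.V}
    (h : Conn (insert g S) p q) : Conn S p q := by
  rcases conn_insert_cases G hge h with h1 | ⟨h2a, h2b⟩ | ⟨h3a, h3b⟩
  · exact h1
  · exact conn_trans G (conn_trans G h2a huv) h2b
  · exact conn_trans G (conn_trans G h3a (conn_symm G huv)) h3b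

lemma ncomp_insert_redundant {S : Finset G.E} {g : G.E} {u v : G.V}
    (hge : G.ends g = s(u, v)) (huv : Conn S u v) :
    ncomp G (insert g S) = ncomp G S := by
  unfold ncomp
  congr 1
  apply Finset.image_congr
  intro x _
  ext y
  simp only [mem_cls]
  exact ⟨fun h => conn_insert_of_redundant G hge huv h,
    fun h => conn_mono G (Finset.subset_insert _ _) h⟩

lemma ncomp_le_insert_add_one {S : Finset G.E} (g : G.E) :
    ncomp G S ≤ ncomp G (insert g S) + 1 := by
  obtain ⟨u, v, hge⟩ := Sym2.exists.mp ⟨G.ends g, rfl⟩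
  by_cases huv : Conn S u v
  · rw [ncomp_insert_redundant G hge huv]; omega
  · -- merged case
    set S' := insert g S with hS'
    have hmerge : Conn S' u v := conn_single G (Finset.mem_insert_self g S) hge
    -- classes that avoid u and v are unchanged
    have hsame : ∀ x : G.V, ¬ Conn S x u → ¬ Conn S x v → cls G S x = cls G S' x := by
      intro x hxu hxv
      ext y
      simp only [mem_cls]
      constructor
      · exact fun h => conn_mono G (Finset.subset_insert _ _) h
      · intro h
        rcases conn_insert_cases G hge h with h1 | ⟨h2a, h2b⟩ | ⟨h3a, h3b⟩
        · exact h1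
        · exact absurd h2a hxu
        · exact absurd h3a hxv
    have hmergedmem : cls G S' u ∈ Finset.univ.image (cls G S') :=
      Finset.mem_image_of_mem _ (Finset.mem_univ u)
    -- merged class is not an S-class
    have hmergednot : cls G S' u ∉ ((Finset.univ.image (cls G S)).erase (cls G S u)).erase
        (cls G S v) := by
      intro hmem
      have hmem2 := Finset.mem_of_mem_erase (Finset.mem_of_mem_erase hmem)
      obtain ⟨x, _, hx⟩ := Finset.mem_image.mp hmem2
      have hne1 : cls G S' u ≠ cls G S u := by
        intro h
        have : v ∈ cls G S' u := (mem_cls G).mpr hmerge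
        rw [h, mem_cls] at this
        exact huv this
      have hne2 : cls G S' u ≠ cls G S v := by
        intro h
        have : u ∈ cls G S' u := self_mem_cls G u
        rw [h, mem_cls] at this
        exact huv (conn_symm G this)
      -- u belongs to the S-class of x, so Conn S x u, contradiction with hne1
      have hxu' : Conn S x u := (mem_cls G).mp (by rw [hx]; exact self_mem_cls G u)
      exact hne1 (by rw [← hx, cls_eq_of_conn G hxu'])
    have hsub : insert (cls G S' u) (((Finset.univ.image (cls G S)).erase (cls G S u)).erase
        (cls G S v)) ⊆ Finset.univ.image (cls G S') := by
      intro C hC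
      rcases Finset.mem_insert.mp hC with rfl | hC
      · exact hmergedmem
      · have hCv := Finset.ne_of_mem_erase hC
        have hC' := Finset.mem_of_mem_erase hC
        have hCu := Finset.ne_of_mem_erase hC'
        obtain ⟨x, _, hx⟩ := Finset.mem_image.mp (Finset.mem_of_mem_erase hC')
        have hxu : ¬ Conn S x u := fun h => hCu (by rw [← hx, cls_eq_of_conn G h])
        have hxv : ¬ Conn S x v := fun h => hCv (by rw [← hx, cls_eq_of_conn G h])
        rw [← hx, hsame x hxu hxv]
        exact Finset.mem_image_of_mem _ (Finset.mem_univ x)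
    have hcard := Finset.card_le_card hsub
    rw [Finset.card_insert_of_notMem hmergednot] at hcard
    have h1 : ((Finset.univ.image (cls G S)).erase (cls G S u)).card
        ≥ (Finset.univ.image (cls G S)).card - 1 := by
      rw [Finset.card_erase_of_mem (Finset.mem_image_of_mem _ (Finset.mem_univ u))]
    have h2 : (((Finset.univ.image (cls G S)).erase (cls G S u)).erase (cls G S v)).card
        ≥ ((Finset.univ.image (cls G S)).erase (cls G S u)).card - 1 :=
      Finset.pred_card_le_card_erase
    unfold ncomp
    omega

/-- C3: `n ≤ ncomp S + |S|`. -/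
lemma card_le_ncomp_add_card (S : Finset G.E) :
    Fintype.card G.V ≤ ncomp G S + S.card := by
  induction S using Finset.induction_on with
  | empty => simp [ncomp_empty]
  | @insert g S hg ih =>
    have := ncomp_le_insert_add_one G (S := S) g
    rw [Finset.card_insert_of_notMem hg]
    omega

end MSTAux

namespace MSTAux
variable (G : UncGraph)
local notation "Conn" => G.ConnectsVia

lemma ncomp_one_of_spanning {S : Finset G.E} (h : ∀ u v : G.V, Conn S u v)
    (hV : 0 < Fintype.card G.V) : ncomp G S = 1 := by
  obtain ⟨v0⟩ := Fintype.card_pos_iff.mp hV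
  have himg : Finset.univ.image (cls G S) = {cls G S v0} := by
    apply Finset.eq_singleton_iff_nonempty_unique_mem.mpr
    refine ⟨⟨cls G S v0, Finset.mem_image_of_mem _ (Finset.mem_univ v0)⟩, ?_⟩
    intro C hC
    obtain ⟨x, _, hx⟩ := Finset.mem_image.mp hC
    rw [← hx, cls_eq_of_conn G (conn_symm G (h v0 x))]
  unfold ncomp
  rw [himg, Finset.card_singleton]

/-- C5: in a "forest" (`ncomp + card = n`), every edge separates its endpoints. -/
lemma forest_sep {S : Finset G.E} (hforest : ncomp G S + S.card = Fintype.card G.V)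
    {g : G.E} (hg : g ∈ S) {u v : G.V} (hge : G.ends g = s(u, v)) :
    ¬ Conn (S.erase g) u v := by
  intro hconn
  have hins : insert g (S.erase g) = S := Finset.insert_erase hg
  have h1 : ncomp G S = ncomp G (S.erase g) := by
    calc ncomp G S = ncomp G (insert g (S.erase g)) := by rw [hins]
    _ = ncomp G (S.erase g) := ncomp_insert_redundant G hge hconn
  have h2 := card_le_ncomp_add_card G (S.erase g)
  rw [Finset.card_erase_of_mem hg] at h2
  have : 1 ≤ S.card := Finset.card_pos.mpr ⟨g, hg⟩
  omega

/-- G4: in a spanning tree, every edge separates its endpoints. -/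
lemma tree_sep {T : Finset G.E} (hT : G.IsSpanningTree T) {g : G.E} (hg : g ∈ T)
    {u v : G.V} (hge : G.ends g = s(u, v)) : ¬ Conn (T.erase g) u v := by
  have hc := hT.2
  have hV : 0 < Fintype.card G.V := by omega
  apply forest_sep G _ hg hge
  rw [ncomp_one_of_spanning G hT.1 hV]
  omega

lemma tree_sep_ne {T : Finset G.E} (hT : G.IsSpanningTree T) {g : G.E} (hg : g ∈ T)
    {u v : G.V} (hge : G.ends g = s(u, v)) : u ≠ v := by
  rintro rfl
  exact tree_sep G hT hg hge (conn_refl G _ u)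

/-- G3: after removing a tree edge every vertex is on one of the two sides. -/
lemma tree_sides {T : Finset G.E} (hT : G.IsSpanningTree T) {g : G.E} (hg : g ∈ T)
    {u v : G.V} (hge : G.ends g = s(u, v)) (z : G.V) :
    Conn (T.erase g) u z ∨ Conn (T.erase g) v z := by
  have h : Conn T u z := hT.1 u z
  rw [← Finset.insert_erase hg] at h
  rcases conn_insert_cases G hge h with h1 | ⟨h2a, h2b⟩ | ⟨h3a, h3b⟩
  · exact Or.inl h1
  · exact Or.inr h2b
  · exact Or.inl h3b

/-- G5: exchange lemma. If `x ≠ r` crosses the cut of tree edge `r` then `x ∉ T` and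
`T - r + x` is a spanning tree. -/
lemma exchange_spanning {T : Finset G.E} (hT : G.IsSpanningTree T) {r x : G.E}
    (hr : r ∈ T) (hxr : x ≠ r) {p q : G.V} (hxe : G.ends x = s(p, q))
    (hcut : ¬ Conn (T.erase r) p q) :
    x ∉ T ∧ G.IsSpanningTree (insert x (T.erase r)) := by
  have hxT : x ∉ T := by
    intro hxT
    exact hcut (conn_single G (Finset.mem_erase.mpr ⟨hxr, hxT⟩) hxe)
  refine ⟨hxT, ?_, ?_⟩
  · -- connectivity
    obtain ⟨u, v, hre⟩ := Sym2.exists.mp ⟨G.ends r, rfl⟩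
    have hsides := tree_sides G hT hr hre
    have hmono : ∀ {y z : G.V}, Conn (T.erase r) y z → Conn (insert x (T.erase r)) y z :=
      fun h => conn_mono G (Finset.subset_insert _ _) h
    have hpq : Conn (insert x (T.erase r)) p q :=
      conn_single G (Finset.mem_insert_self _ _) hxe
    have huv : Conn (insert x (T.erase r)) u v := by
      rcases hsides p with hp | hp <;> rcases hsides q with hq | hq
      · exact absurd (conn_trans G (conn_symm G hp) hq) hcut
      · exact conn_trans G (hmono hp) (conn_trans G hpq (conn_symm G (hmono hq)))
      · exact conn_trans G (hmono hq) (conn_trans G (conn_symm G hpq) (conn_symm G (hmono hp)))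
      · exact absurd (conn_trans G (conn_symm G hp) hq) hcut
    intro y z
    have hy : Conn (insert x (T.erase r)) u y := by
      rcases hsides y with h | h
      · exact hmono h
      · exact conn_trans G huv (hmono h)
    have hz : Conn (insert x (T.erase r)) u z := by
      rcases hsides z with h | h
      · exact hmono h
      · exact conn_trans G huv (hmono h)
    exact conn_trans G (conn_symm G hy) hz
  · -- cardinality
    have hxe' : x ∉ T.erase r := fun h => hxT (Finset.mem_of_mem_erase h)
    rw [Finset.card_insert_of_notMem hxe', Finset.card_erase_of_mem hr]
    have : 1 ≤ T.card := Finset.card_pos.mpr ⟨r, hr⟩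
    have h2 := hT.2
    omega

/-- G6: existence of a minimal connecting subset. -/
lemma exists_minimal_connector {S : Finset G.E} {p q : G.V} (h : Conn S p q) :
    ∃ M : Finset G.E, M ⊆ S ∧ Conn M p q ∧ ∀ r ∈ M, ¬ Conn (M.erase r) p q := by
  classical
  set F := S.powerset.filter (fun M => Conn M p q) with hF
  have hSF : S ∈ F := by simp [hF, h]
  obtain ⟨M, hMF, hmin⟩ := F.exists_min_image Finset.card ⟨S, hSF⟩
  simp only [hF, Finset.mem_filter, Finset.mem_powerset] at hMF
  refine ⟨M, hMF.1, hMF.2, ?_⟩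
  intro r hr hconn
  have hmem : M.erase r ∈ F := by
    simp only [hF, Finset.mem_filter, Finset.mem_powerset]
    exact ⟨(Finset.erase_subset _ _).trans hMF.1, hconn⟩
  have := hmin _ hmem
  rw [Finset.card_erase_of_mem hr] at this
  have : 1 ≤ M.card := Finset.card_pos.mpr ⟨r, hr⟩
  omega

/-- G7: an edge of a minimal connector inside a spanning tree separates `p,q` in the tree. -/
lemma minimal_connector_sep {T M : Finset G.E} (hT : G.IsSpanningTree T) (hMT : M ⊆ T)
    {p q : G.V} (hconn : Conn M p q) (hmin : ∀ r ∈ M, ¬ Conn (M.erase r) p q)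
    {r : G.E} (hr : r ∈ M) : ¬ Conn (T.erase r) p q := by
  intro habs
  obtain ⟨u, v, hre⟩ := Sym2.exists.mp ⟨G.ends r, rfl⟩
  have hMsub : M.erase r ⊆ T.erase r := Finset.erase_subset_erase _ hMT
  have h1 : Conn (insert r (M.erase r)) p q := by rw [Finset.insert_erase hr]; exact hconn
  have hsep := tree_sep G hT (hMT hr) hre
  rcases conn_insert_cases G hre h1 with h2 | ⟨h3a, h3b⟩ | ⟨h4a, h4b⟩
  · exact hmin r hr h2
  · -- p ~ u, v ~ q in M.erase r
    exact hsep (conn_trans G (conn_symm G (conn_mono G hMsub h3a))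
      (conn_trans G habs (conn_symm G (conn_mono G hMsub h3b))))
  · exact hsep (conn_symm G (conn_trans G (conn_symm G (conn_mono G hMsub h4a))
      (conn_trans G habs (conn_symm G (conn_mono G hMsub h4b)))))

end MSTAux

namespace MSTAux
variable (G : UncGraph)
local notation "Conn" => G.ConnectsVia

/-- Contribution of one edge to the degree of a vertex. -/
noncomputable def contrib (g : G.E) (x : G.V) : ℕ :=
  if G.ends g = s(x, x) then 2 else if x ∈ G.ends g then 1 else 0

lemma incCount_eq_sum (S : Finset G.E) (v : G.V) :
    G.incCount S v = ∑ g ∈ S, contrib G g v := rfl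

lemma contrib_eq_loop {g : G.E} {u : G.V} (hg : G.ends g = s(u, u)) (x : G.V) :
    contrib G g x = if x = u then 2 else 0 := by
  unfold contrib
  rw [hg]
  by_cases hxu : x = u
  · subst hxu; simp
  · rw [if_neg, if_neg, if_neg hxu]
    · simp only [Sym2.mem_iff]
      tauto
    · rw [Sym2.eq_iff]
      tauto

lemma contrib_eq_nonloop {g : G.E} {u v : G.V} (hg : G.ends g = s(u, v)) (huv : u ≠ v)
    (x : G.V) :
    contrib G g x = (if x = u then 1 else 0) + (if x = v then 1 else 0) := by
  unfold contrib
  rw [hg]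
  have h1 : ¬ ((s(u, v) : Sym2 G.V) = s(x, x)) := by
    rw [Sym2.eq_iff]
    rintro (⟨h1, h2⟩ | ⟨h1, h2⟩) <;> exact huv (h1.trans h2.symm)
  rw [if_neg h1]
  simp only [Sym2.mem_iff]
  by_cases hxu : x = u
  · subst hxu; simp [huv]
  · by_cases hxv : x = v
    · subst hxv; simp [hxu]
    · simp [hxu, hxv]

lemma contrib_sum (g : G.E) : ∑ x : G.V, contrib G g x = 2 := by
  obtain ⟨u, v, hg⟩ := Sym2.exists.mp ⟨G.ends g, rfl⟩
  by_cases huv : u = v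
  · subst huv
    rw [Finset.sum_congr rfl (fun x _ => contrib_eq_loop G hg x)]
    simp
  · rw [Finset.sum_congr rfl (fun x _ => contrib_eq_nonloop G hg huv x)]
    rw [Finset.sum_add_distrib]
    simp [Finset.sum_ite_eq', huv]

lemma incCount_pos {S : Finset G.E} {g : G.E} (hg : g ∈ S) {x : G.V}
    (hx : x ∈ G.ends g) : 1 ≤ G.incCount S x := by
  rw [incCount_eq_sum]
  calc 1 ≤ contrib G g x := by
        unfold contrib
        split
        · omega
        · simp [hx]
    _ ≤ ∑ g' ∈ S, contrib G g' x :=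
        Finset.single_le_sum (f := fun g' => contrib G g' x) (fun _ _ => Nat.zero_le _) hg

lemma incCount_erase_add {S : Finset G.E} {g : G.E} (hg : g ∈ S) (x : G.V) :
    G.incCount (S.erase g) x + contrib G g x = G.incCount S x := by
  rw [incCount_eq_sum, incCount_eq_sum]
  exact Finset.sum_erase_add _ _ hg

/-- H2: handshake parity on a connectivity-closed vertex set. -/
lemma handshake_closed {S : Finset G.E} {K : Finset G.V}
    (hK : ∀ g ∈ S, ∀ x y : G.V, G.ends g = s(x, y) → (x ∈ K ↔ y ∈ K)) :
    Even (∑ x ∈ K, G.incCount S x) := by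
  have hswap : ∑ x ∈ K, G.incCount S x = ∑ g ∈ S, ∑ x ∈ K, contrib G g x := by
    rw [Finset.sum_congr rfl (fun x _ => incCount_eq_sum G S x)]
    exact Finset.sum_comm
  rw [hswap]
  apply Finset.even_sum
  intro g hg
  obtain ⟨u, v, hge⟩ := Sym2.exists.mp ⟨G.ends g, rfl⟩
  by_cases huv : u = v
  · subst huv
    rw [Finset.sum_congr rfl (fun x _ => contrib_eq_loop G hge x)]
    rw [Finset.sum_ite_eq' K u (fun _ => 2)]
    by_cases h : u ∈ K
    · rw [if_pos h]; decide
    · rw [if_neg h]; decide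
  · rw [Finset.sum_congr rfl (fun x _ => contrib_eq_nonloop G hge huv x)]
    rw [Finset.sum_add_distrib, Finset.sum_ite_eq' K u (fun _ => 1),
      Finset.sum_ite_eq' K v (fun _ => 1)]
    have := hK g hg u v hge
    by_cases huK : u ∈ K
    · rw [if_pos huK, if_pos (this.mp huK)]
      decide
    · rw [if_neg huK, if_neg (fun h => huK (this.mpr h))]
      decide

lemma conn_untouched {S : Finset G.E} {x y : G.V} (hx : G.incCount S x = 0)
    (h : Conn S x y) : x = y := by
  rcases h.cases_head with h | ⟨c, ⟨g, hg, hge⟩, _⟩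
  · exact h
  · exfalso
    have : 1 ≤ G.incCount S x := incCount_pos G hg (by rw [hge]; simp)
    omega

/-- The support of a path has exactly `|P| + 1` vertices. -/
lemma path_supp_card {P : Finset G.E} {a b : G.V} (hP : G.IsPathBetween P a b) :
    (Finset.univ.filter (fun x => G.incCount P x ≠ 0)).card = P.card + 1 := by
  obtain ⟨hab, ha, hb, hmid, hconn⟩ := hP
  set s := Finset.univ.filter (fun x => G.incCount P x ≠ 0) with hs
  have hasmem : a ∈ s := by simp [hs, ha]
  have hbsmem : b ∈ s := by simp [hs, hb]
  have htotal : ∑ x : G.V, G.incCount P x = 2 * P.card := by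
    rw [Finset.sum_congr rfl (fun x _ => incCount_eq_sum G P x), Finset.sum_comm]
    rw [Finset.sum_congr rfl (fun g _ => contrib_sum G g)]
    simp [Nat.mul_comm]
  have hfilter : ∑ x ∈ s, G.incCount P x = ∑ x : G.V, G.incCount P x := by
    apply Finset.sum_filter_of_ne
    intro x _ h
    exact h
  set s' := (s.erase a).erase b with hs'
  have hbs : b ∈ s.erase a := Finset.mem_erase.mpr ⟨Ne.symm hab, hbsmem⟩
  have h1 : ∑ x ∈ s.erase a, G.incCount P x + G.incCount P a = ∑ x ∈ s, G.incCount P x :=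
    Finset.sum_erase_add _ _ hasmem
  have h2 : ∑ x ∈ s', G.incCount P x + G.incCount P b = ∑ x ∈ s.erase a, G.incCount P x :=
    Finset.sum_erase_add _ _ hbs
  have h3 : ∑ x ∈ s', G.incCount P x = 2 * s'.card := by
    rw [Finset.sum_congr rfl (fun x hx => ?_), Finset.sum_const, smul_eq_mul, Nat.mul_comm]
    have hxb := Finset.ne_of_mem_erase hx
    have hxa := Finset.ne_of_mem_erase (Finset.mem_of_mem_erase hx)
    have hxs : x ∈ s := Finset.mem_of_mem_erase (Finset.mem_of_mem_erase hx)
    have hxne : G.incCount P x ≠ 0 := by simpa [hs] using hxs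
    rcases hmid x hxa hxb with h | h
    · exact absurd h hxne
    · exact h
  have hcard1 : (s.erase a).card = s.card - 1 := Finset.card_erase_of_mem hasmem
  have hcard2 : s'.card = (s.erase a).card - 1 := Finset.card_erase_of_mem hbs
  have hscardpos : 1 ≤ s.card := Finset.card_pos.mpr ⟨a, hasmem⟩
  have hscardpos2 : 2 ≤ s.card := by
    have := Finset.card_pos.mpr ⟨b, hbs⟩
    omega
  rw [ha] at h1
  rw [hb] at h2
  omega

/-- A path `P` is a forest: `ncomp + |P| = n`. -/
lemma path_forest {P : Finset G.E} {a b : G.V} (hP : G.IsPathBetween P a b) :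
    ncomp G P + P.card = Fintype.card G.V := by
  have hcls_untouched : ∀ x : G.V, G.incCount P x = 0 → cls G P x = {x} := by
    intro x hx
    ext y
    simp only [mem_cls, Finset.mem_singleton]
    constructor
    · intro h; exact (conn_untouched G hx h).symm
    · rintro rfl; exact conn_refl G _ _
  have himg : Finset.univ.image (cls G P) =
      insert (cls G P a) ((Finset.univ.filter (fun x => G.incCount P x = 0)).image
        (fun x => ({x} : Finset G.V))) := by
    ext C
    simp only [Finset.mem_image, Finset.mem_insert, Finset.mem_filter, Finset.mem_univ,
      true_and]
    constructor
    · rintro ⟨x, _, rfl⟩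
      by_cases hx : G.incCount P x = 0
      · exact Or.inr ⟨x, hx, (hcls_untouched x hx).symm⟩
      · exact Or.inl (cls_eq_of_conn G (hP.2.2.2.2 x hx)).symm
    · rintro (rfl | ⟨x, hx, rfl⟩)
      · exact ⟨a, rfl⟩
      · exact ⟨x, hcls_untouched x hx⟩
  have hnotmem : cls G P a ∉ (Finset.univ.filter (fun x => G.incCount P x = 0)).image
      (fun x => ({x} : Finset G.V)) := by
    intro h
    obtain ⟨x, hx, hxe⟩ := Finset.mem_image.mp h
    simp only [Finset.mem_filter, Finset.mem_univ, true_and] at hx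
    have : a ∈ cls G P a := self_mem_cls G a
    rw [← hxe, Finset.mem_singleton] at this
    subst this
    rw [hP.2.1] at hx
    omega
  have hinj : ((Finset.univ.filter (fun x => G.incCount P x = 0)).image
      (fun x => ({x} : Finset G.V))).card =
      (Finset.univ.filter (fun x => G.incCount P x = 0)).card :=
    Finset.card_image_of_injective _ (fun x y hxy => Finset.singleton_injective hxy)
  have hcompl := Finset.card_filter_add_card_filter_not
    (s := (Finset.univ : Finset G.V)) (p := fun x => G.incCount P x = 0)
  have hsupp := path_supp_card G hP
  have hsimp : (Finset.univ.filter (fun x => ¬ G.incCount P x = 0)).card = P.card + 1 := by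
    rw [← hsupp]
  unfold ncomp
  rw [himg, Finset.card_insert_of_notMem hnotmem, hinj]
  simp only [Finset.card_univ] at hcompl
  omega

/-- P6: removing an edge from a path disconnects its endpoints `a`, `b` — or rather,
the two endpoints of the path are never reconnected. -/
lemma path_erase_not_conn {P : Finset G.E} {a b : G.V} (hP : G.IsPathBetween P a b)
    {e : G.E} (he : e ∈ P) : ¬ Conn (P.erase e) a b := by
  intro hab
  obtain ⟨u, v, hee⟩ := Sym2.exists.mp ⟨G.ends e, rfl⟩
  have hsep := forest_sep G (path_forest G hP) he hee
  have hne : u ≠ v := by rintro rfl; exact hsep (conn_refl G _ u)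
  set K := Finset.univ.filter (fun x => Conn (P.erase e) v x) with hK
  have hKmem : ∀ x : G.V, x ∈ K ↔ Conn (P.erase e) v x := by simp [hK]
  have hKclosed : ∀ g ∈ P.erase e, ∀ x y : G.V, G.ends g = s(x, y) → (x ∈ K ↔ y ∈ K) := by
    intro g hg x y hge
    rw [hKmem, hKmem]
    have hconn := conn_single G hg hge
    exact ⟨fun h => conn_trans G h hconn, fun h => conn_trans G h (conn_symm G hconn)⟩
  have hEven := handshake_closed G hKclosed
  have hsum : ∑ x ∈ K, G.incCount (P.erase e) x + ∑ x ∈ K, contrib G e x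
      = ∑ x ∈ K, G.incCount P x := by
    rw [← Finset.sum_add_distrib]
    exact Finset.sum_congr rfl (fun x _ => incCount_erase_add G he x)
  have hcontrib : ∑ x ∈ K, contrib G e x = 1 := by
    rw [Finset.sum_congr rfl (fun x _ => contrib_eq_nonloop G hee hne x)]
    rw [Finset.sum_add_distrib, Finset.sum_ite_eq' K u (fun _ => 1),
      Finset.sum_ite_eq' K v (fun _ => 1)]
    have huK : u ∉ K := by
      rw [hKmem]
      intro h
      exact hsep (conn_symm G h)
    have hvK : v ∈ K := (hKmem v).mpr (conn_refl G _ v)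
    rw [if_neg huK, if_pos hvK]
  have hKsupp : ∀ x ∈ K, G.incCount P x ≠ 0 := by
    intro x hx
    rw [hKmem] at hx
    intro h0
    have h1 : G.incCount (P.erase e) x = 0 := by
      have := incCount_erase_add G he x
      omega
    have := conn_untouched G h1 (conn_symm G hx)
    subst this
    have : 1 ≤ G.incCount P x := incCount_pos G he (by rw [hee]; simp)
    omega
  have habiff : (a ∈ K) ↔ (b ∈ K) := by
    rw [hKmem, hKmem]
    exact ⟨fun h => conn_trans G h hab, fun h => conn_trans G h (conn_symm G hab)⟩
  have hEvenP : Even (∑ x ∈ K, G.incCount P x) := by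
    by_cases haK : a ∈ K
    · have hbK : b ∈ K := habiff.mp haK
      have hbK' : b ∈ K.erase a := Finset.mem_erase.mpr ⟨Ne.symm hP.1, hbK⟩
      have h1 := Finset.sum_erase_add K (G.incCount P) haK
      have h2 := Finset.sum_erase_add (K.erase a) (G.incCount P) hbK'
      have h3 : ∑ x ∈ (K.erase a).erase b, G.incCount P x
          = 2 * ((K.erase a).erase b).card := by
        rw [Finset.sum_congr rfl (fun x hx => ?_), Finset.sum_const, smul_eq_mul,
          Nat.mul_comm]
        have hxb := Finset.ne_of_mem_erase hx
        have hxa := Finset.ne_of_mem_erase (Finset.mem_of_mem_erase hx)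
        have hxK : x ∈ K := Finset.mem_of_mem_erase (Finset.mem_of_mem_erase hx)
        rcases hP.2.2.2.1 x hxa hxb with h | h
        · exact absurd h (hKsupp x hxK)
        · exact h
      rw [hP.2.1] at h1
      rw [hP.2.2.1] at h2
      refine ⟨((K.erase a).erase b).card + 1, by omega⟩
    · have hbK : b ∉ K := fun h => haK (habiff.mpr h)
      have h3 : ∑ x ∈ K, G.incCount P x = 2 * K.card := by
        rw [Finset.sum_congr rfl (fun x hx => ?_), Finset.sum_const, smul_eq_mul,
          Nat.mul_comm]
        rcases hP.2.2.2.1 x (fun h => haK (h ▸ hx)) (fun h => hbK (h ▸ hx)) with h | h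
        · exact absurd h (hKsupp x hx)
        · exact h
      exact ⟨K.card, by omega⟩
  rw [← hsum, hcontrib] at hEvenP
  obtain ⟨k1, hk1⟩ := hEven
  obtain ⟨k2, hk2⟩ := hEvenP
  omega

lemma path_conn {P : Finset G.E} {a b : G.V} (hP : G.IsPathBetween P a b) : Conn P a b := by
  apply hP.2.2.2.2
  rw [hP.2.2.1]
  omega

/-- P7: full path decomposition & separation in an ambient spanning tree. -/
lemma path_tree_sep {T P : Finset G.E} {a b : G.V} (hT : G.IsSpanningTree T)
    (hPT : P ⊆ T) (hP : G.IsPathBetween P a b) {e : G.E} (he : e ∈ P)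
    {u v : G.V} (hee : G.ends e = s(u, v)) :
    ((Conn (P.erase e) a u ∧ Conn (P.erase e) v b) ∨
      (Conn (P.erase e) a v ∧ Conn (P.erase e) u b)) ∧ ¬ Conn (T.erase e) a b := by
  have hconn : Conn P a b := path_conn G hP
  have h1 : Conn (insert e (P.erase e)) a b := by rw [Finset.insert_erase he]; exact hconn
  have hdecomp : (Conn (P.erase e) a u ∧ Conn (P.erase e) v b) ∨
      (Conn (P.erase e) a v ∧ Conn (P.erase e) u b) := by
    rcases conn_insert_cases G hee h1 with h2 | h3 | h4
    · exact absurd h2 (path_erase_not_conn G hP he)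
    · exact Or.inl h3
    · exact Or.inr h4
  refine ⟨hdecomp, ?_⟩
  intro hab
  have hsep := tree_sep G hT (hPT he) hee
  have hsub : P.erase e ⊆ T.erase e := Finset.erase_subset_erase _ hPT
  rcases hdecomp with ⟨h5, h6⟩ | ⟨h5, h6⟩
  · exact hsep (conn_trans G (conn_symm G (conn_mono G hsub h5))
      (conn_trans G hab (conn_symm G (conn_mono G hsub h6))))
  · exact hsep (conn_symm G (conn_trans G (conn_symm G (conn_mono G hsub h5))
      (conn_trans G hab (conn_symm G (conn_mono G hsub h6)))))

end MSTAux

namespace MSTAux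
variable (G : UncGraph)
local notation "Conn" => G.ConnectsVia

lemma sum_exchange {T : Finset G.E} {r x : G.E} (hr : r ∈ T) (hx : x ∉ T)
    (wf : G.E → ℝ) :
    ∑ z ∈ insert x (T.erase r), wf z = (∑ z ∈ T, wf z) - wf r + wf x := by
  have h1 : x ∉ T.erase r := fun h => hx (Finset.mem_of_mem_erase h)
  rw [Finset.sum_insert h1]
  have h2 := Finset.sum_erase_add T wf hr
  linarith

/-- M2: upper-limit exchange across a tree cut. -/
lemma upper_exchange {T : Finset G.E} (hT : G.UniqueLimitTrees T) {r x : G.E}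
    (hr : r ∈ T) (hxr : x ≠ r) {p q : G.V} (hxe : G.ends x = s(p, q))
    (hcut : ¬ Conn (T.erase r) p q) :
    G.U r ≤ G.U x ∧ (G.U r = G.U x → (G.L x = G.U x ∧ G.L r ≠ G.U r)) := by
  obtain ⟨hlowT, ⟨ε₀, hε₀, hup⟩, _, hunU⟩ := hT
  have hTsp : G.IsSpanningTree T := (hup (ε₀/2) (by linarith) (by linarith)).1
  obtain ⟨hxT, hT'sp⟩ := exchange_spanning G hTsp hr hxr hxe hcut
  have hxT' : x ∈ insert x (T.erase r) := Finset.mem_insert_self _ _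
  have hineq : ∀ ε : ℝ, 0 < ε → ε < ε₀ → G.upperWeight ε r ≤ G.upperWeight ε x := by
    intro ε h1 h2
    have := (hup ε h1 h2).2 _ hT'sp
    rw [sum_exchange G hr hxT] at this
    linarith
  have hLUr := G.LU r
  have hLUx := G.LU x
  -- if the exchange does not change the weight for any ε, uniqueness is violated
  have huniq : ¬ (∀ ε : ℝ, 0 < ε → ε < ε₀ → G.upperWeight ε x = G.upperWeight ε r) := by
    intro heq
    have hult : G.IsUpperLimitTree (insert x (T.erase r)) := by
      refine ⟨ε₀, hε₀, fun ε h1 h2 => ⟨hT'sp, fun T'' hT'' => ?_⟩⟩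
      rw [sum_exchange G hr hxT, heq ε h1 h2]
      have := (hup ε h1 h2).2 T'' hT''
      linarith
    have := hunU _ hult
    rw [← this] at hxT
    exact hxT hxT'
  by_cases htr : G.L r = G.U r <;> by_cases htx : G.L x = G.U x <;>
    simp only [UncGraph.upperWeight, htr, htx, if_pos, if_neg, if_true, if_false] at hineq huniq
  · -- both trivial
    have h1 := hineq (ε₀/2) (by linarith) (by linarith)
    constructor
    · linarith
    · intro heq
      exfalso
      exact huniq (fun ε _ _ => heq.symm)
  · -- r trivial, x nontrivial : U r < U x
    have h1 := hineq (ε₀/2) (by linarith) (by linarith)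
    have hlt : G.L x < G.U x := lt_of_le_of_ne hLUx htx
    constructor
    · linarith
    · intro heq; exfalso; linarith
  · -- r nontrivial, x trivial
    have hge : G.U r ≤ G.U x := by
      by_contra hlt
      push_neg at hlt
      have hε : 0 < min ε₀ (G.U r - G.U x) / 2 := by
        have : 0 < min ε₀ (G.U r - G.U x) := lt_min hε₀ (by linarith)
        linarith
      have h1 := hineq (min ε₀ (G.U r - G.U x) / 2) hε
        (by have := min_le_left ε₀ (G.U r - G.U x); linarith)
      have h2 := min_le_right ε₀ (G.U r - G.U x)
      linarith
    exact ⟨hge, fun _ => ⟨htx, htr⟩⟩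
  · -- both nontrivial
    have h1 := hineq (ε₀/2) (by linarith) (by linarith)
    constructor
    · linarith
    · intro heq
      exfalso
      exact huniq (fun ε _ _ => by rw [heq])

/-- M3: lower-limit exchange across a tree cut. -/
lemma lower_exchange {T : Finset G.E} (hT : G.UniqueLimitTrees T) {r x : G.E}
    (hr : r ∈ T) (hxr : x ≠ r) {p q : G.V} (hxe : G.ends x = s(p, q))
    (hcut : ¬ Conn (T.erase r) p q) :
    G.L r ≤ G.L x ∧ (G.L r = G.L x → (G.L x ≠ G.U x ∧ G.L r = G.U r)) := by
  obtain ⟨⟨ε₀, hε₀, hlow⟩, hupT, hunL, _⟩ := hT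
  have hTsp : G.IsSpanningTree T := (hlow (ε₀/2) (by linarith) (by linarith)).1
  obtain ⟨hxT, hT'sp⟩ := exchange_spanning G hTsp hr hxr hxe hcut
  have hxT' : x ∈ insert x (T.erase r) := Finset.mem_insert_self _ _
  have hineq : ∀ ε : ℝ, 0 < ε → ε < ε₀ → G.lowerWeight ε r ≤ G.lowerWeight ε x := by
    intro ε h1 h2
    have := (hlow ε h1 h2).2 _ hT'sp
    rw [sum_exchange G hr hxT] at this
    linarith
  have hLUr := G.LU r
  have hLUx := G.LU x
  have huniq : ¬ (∀ ε : ℝ, 0 < ε → ε < ε₀ → G.lowerWeight ε x = G.lowerWeight ε r) := by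
    intro heq
    have hult : G.IsLowerLimitTree (insert x (T.erase r)) := by
      refine ⟨ε₀, hε₀, fun ε h1 h2 => ⟨hT'sp, fun T'' hT'' => ?_⟩⟩
      rw [sum_exchange G hr hxT, heq ε h1 h2]
      have := (hlow ε h1 h2).2 T'' hT''
      linarith
    have := hunL _ hult
    rw [← this] at hxT
    exact hxT hxT'
  by_cases htr : G.L r = G.U r <;> by_cases htx : G.L x = G.U x <;>
    simp only [UncGraph.lowerWeight, htr, htx, if_pos, if_neg, if_true, if_false] at hineq huniq
  · -- both trivial : hineq gives U r ≤ U x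
    have h1 := hineq (ε₀/2) (by linarith) (by linarith)
    constructor
    · rw [htr, htx]; linarith
    · intro heq
      exfalso
      exact huniq (fun ε _ _ => by rw [← htx, ← heq, htr])
  · -- r trivial, x nontrivial : hineq gives U r ≤ L x + ε
    have hge : G.L r ≤ G.L x := by
      by_contra hlt
      push_neg at hlt
      have hε : 0 < min ε₀ (G.L r - G.L x) / 2 := by
        have : 0 < min ε₀ (G.L r - G.L x) := lt_min hε₀ (by linarith)
        linarith
      have h1 := hineq (min ε₀ (G.L r - G.L x) / 2) hε
        (by have := min_le_left ε₀ (G.L r - G.L x); linarith)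
      have h2 := min_le_right ε₀ (G.L r - G.L x)
      rw [← htr] at h1
      linarith
    exact ⟨hge, fun _ => ⟨htx, htr⟩⟩
  · -- r nontrivial, x trivial : hineq gives L r + ε ≤ U x = L x
    have h1 := hineq (ε₀/2) (by linarith) (by linarith)
    have key : G.L r < G.L x := by rw [htx]; linarith
    exact ⟨le_of_lt key, fun heq => absurd heq (ne_of_lt key)⟩
  · -- both nontrivial
    have h1 := hineq (ε₀/2) (by linarith) (by linarith)
    constructor
    · linarith
    · intro heq
      exfalso
      exact huniq (fun ε _ _ => by rw [heq])

/-- M4: verification forces the tree edge's (restricted) upper limit below the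
(restricted) lower limit of any edge crossing its cut. -/
lemma verify_cut {w : G.E → ℝ} (hw : G.Valid w) {Q Tstar : Finset G.E}
    (hver : G.Verifies w Q Tstar) {f y : G.E} (hf : f ∈ Tstar) (hyf : y ≠ f)
    {p q : G.V} (hye : G.ends y = s(p, q)) (hcut : ¬ Conn (Tstar.erase f) p q) :
    (if f ∈ Q then w f else G.U f) ≤ (if y ∈ Q then w y else G.L y) := by
  have hTsp : G.IsSpanningTree Tstar := (hver w ⟨fun _ _ => rfl, hw⟩).1
  obtain ⟨hyT, hT'sp⟩ := exchange_spanning G hTsp hf hyf hye hcut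
  by_contra hlt
  push_neg at hlt
  set RU := if f ∈ Q then w f else G.U f with hRU
  set RL := if y ∈ Q then w y else G.L y with hRL
  set m := (RU + RL) / 2 with hm
  have hm1 : m < RU := by rw [hm]; linarith
  have hm2 : RL < m := by rw [hm]; linarith
  have hLUf := G.LU f
  have hLUy := G.LU y
  have hwf := hw f
  have hwy := hw y
  -- choose a value for f
  have hvf : ∃ t : ℝ, t ∈ G.I f ∧ m < t ∧ (f ∈ Q → t = w f) := by
    by_cases hfQ : f ∈ Q
    · exact ⟨w f, hwf, by rw [hRU, if_pos hfQ] at hm1; exact ⟨hm1, fun _ => rfl⟩⟩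
    · rw [hRU, if_neg hfQ] at hm1
      by_cases htf : G.L f = G.U f
      · exact ⟨G.L f, Or.inl ⟨htf, rfl⟩, by rw [htf]; exact hm1, fun h => absurd h hfQ⟩
      · have hlt2 : G.L f < G.U f := lt_of_le_of_ne hLUf htf
        refine ⟨(max (G.L f) m + G.U f) / 2, Or.inr ⟨?_, ?_⟩, ?_, fun h => absurd h hfQ⟩
        · have := le_max_left (G.L f) m
          have hmax : max (G.L f) m < G.U f := max_lt hlt2 hm1
          linarith
        · have hmax : max (G.L f) m < G.U f := max_lt hlt2 hm1
          linarith
        · have := le_max_right (G.L f) m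
          have hmax : max (G.L f) m < G.U f := max_lt hlt2 hm1
          linarith
  -- choose a value for y
  have hvy : ∃ t : ℝ, t ∈ G.I y ∧ t < m ∧ (y ∈ Q → t = w y) := by
    by_cases hyQ : y ∈ Q
    · exact ⟨w y, hwy, by rw [hRL, if_pos hyQ] at hm2; exact ⟨hm2, fun _ => rfl⟩⟩
    · rw [hRL, if_neg hyQ] at hm2
      by_cases hty : G.L y = G.U y
      · exact ⟨G.L y, Or.inl ⟨hty, rfl⟩, hm2, fun h => absurd h hyQ⟩
      · have hlt2 : G.L y < G.U y := lt_of_le_of_ne hLUy hty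
        refine ⟨(G.L y + min (G.U y) m) / 2, Or.inr ⟨?_, ?_⟩, ?_, fun h => absurd h hyQ⟩
        · have hmin : G.L y < min (G.U y) m := lt_min hlt2 hm2
          linarith
        · have := min_le_left (G.U y) m
          have hmin : G.L y < min (G.U y) m := lt_min hlt2 hm2
          linarith
        · have := min_le_right (G.U y) m
          have hmin : G.L y < min (G.U y) m := lt_min hlt2 hm2
          linarith
  obtain ⟨vf, hvfI, hvfm, hvfQ⟩ := hvf
  obtain ⟨vy, hvyI, hvym, hvyQ⟩ := hvy
  set wf : G.E → ℝ := fun z => if z = f then vf else if z = y then vy else w z with hwfdef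
  have hevf : wf f = vf := by simp [hwfdef]
  have hevy : wf y = vy := by simp [hwfdef, hyf]
  have hevz : ∀ z, z ≠ f → z ≠ y → wf z = w z := by
    intro z h1 h2
    simp [hwfdef, h1, h2]
  have hcompat : G.Compatible w Q wf := by
    refine ⟨fun z hz => ?_, fun z => ?_⟩
    · by_cases hzf : z = f
      · subst hzf; rw [hevf]; exact hvfQ hz
      · by_cases hzy : z = y
        · subst hzy; rw [hevy]; exact hvyQ hz
        · rw [hevz z hzf hzy]
    · by_cases hzf : z = f
      · subst hzf; rw [hevf]; exact hvfI
      · by_cases hzy : z = y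
        · subst hzy; rw [hevy]; exact hvyI
        · rw [hevz z hzf hzy]; exact hw z
  have hMST := hver wf hcompat
  have := hMST.2 _ hT'sp
  rw [sum_exchange G hf hyT] at this
  rw [hevf, hevy] at this
  linarith

end MSTAux

namespace MSTAux
variable (G : UncGraph)
local notation "Conn" => G.ConnectsVia

lemma valid_lb {x : ℝ} {z : G.E} (h : x ∈ G.I z) : G.L z ≤ x := by
  rcases h with ⟨_, hv⟩ | ⟨h1, _⟩
  · exact le_of_eq hv.symm
  · exact le_of_lt h1

lemma valid_ub {x : ℝ} {z : G.E} (h : x ∈ G.I z) : x ≤ G.U z := by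
  rcases h with ⟨ht, hv⟩ | ⟨_, h2⟩
  · rw [hv, ht]
  · exact le_of_lt h2

/-- Lemma B: every edge of `T* \ T` must have been queried. -/
lemma star_minus_tree_queried {w : G.E → ℝ} (hw : G.Valid w) {T Q Tstar : Finset G.E}
    (hT : G.UniqueLimitTrees T) (hver : G.Verifies w Q Tstar)
    (hTsp : G.IsSpanningTree T) (hTstarsp : G.IsSpanningTree Tstar)
    {x : G.E} (hxstar : x ∈ Tstar) (hxT : x ∉ T) : x ∈ Q := by
  by_contra hxQ
  obtain ⟨p, q, hxe⟩ := Sym2.exists.mp ⟨G.ends x, rfl⟩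
  have hpq_sep_star : ¬ Conn (Tstar.erase x) p q := tree_sep G hTstarsp hxstar hxe
  have hconnT : Conn T p q := hTsp.1 p q
  obtain ⟨M, hMsub, hMconn, hMmin⟩ := exists_minimal_connector G hconnT
  have hcross : ¬ (∀ g ∈ M, ∀ y z : G.V, G.ends g = s(y, z) → Conn (Tstar.erase x) y z) :=
    fun hall => hpq_sep_star (conn_transfer G hall hMconn)
  push_neg at hcross
  obtain ⟨r, hrM, y, z, hre, hsep⟩ := hcross
  have hrT : r ∈ T := hMsub hrM
  have hrx : x ≠ r := fun h => hxT (h ▸ hrT)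
  have hcutT : ¬ Conn (T.erase r) p q :=
    minimal_connector_sep G hTsp hMsub hMconn hMmin hrM
  have hUP := upper_exchange G hT hrT hrx hxe hcutT
  have hVC := verify_cut G hw hver hxstar (Ne.symm hrx) hre hsep
  rw [if_neg hxQ] at hVC
  by_cases hrQ : r ∈ Q
  · rw [if_pos hrQ] at hVC
    rcases hw r with ⟨htriv, hval⟩ | ⟨h1, h2⟩
    · have h4 : G.U r = G.U x := le_antisymm hUP.1 (by rw [hval, htriv] at hVC; linarith)
      exact (hUP.2 h4).2 htriv
    · linarith [hUP.1]
  · rw [if_neg hrQ] at hVC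
    have h4 : G.U r = G.U x := le_antisymm hUP.1 (le_trans hVC (G.LU r))
    obtain ⟨_, hrnontriv⟩ := hUP.2 h4
    exact hrnontriv (le_antisymm (G.LU r) (by linarith [hVC, hUP.1]))

end MSTAux
/-- in an instance with unique `T_L = T_U`, let `Q` be a
feasible query set verifying the MST `T*`, let `P ⊆ T_L` be a path between `a`
and `b`, and let `e ∈ P` be the edge with the highest upper limit on `P`. If
`e ∉ Q`, then the (unique) path from `a` to `b` in `T*` contains `e`, and after
querying `Q` the edge `e` has the highest upper limit on that path. -/
theorem path_max_upper_limit_preserved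
    (G : UncGraph) (w : G.E → ℝ) (hw : G.Valid w)
    (T : Finset G.E) (hT : G.UniqueLimitTrees T)
    (Q : Finset G.E) (Tstar : Finset G.E) (hver : G.Verifies w Q Tstar)
    (a b : G.V) (P : Finset G.E) (hP : G.IsPathBetween P a b) (hPT : P ⊆ T)
    (e : G.E) (heP : e ∈ P) (hmax : ∀ e' ∈ P, G.U e' ≤ G.U e) (heQ : e ∉ Q) :
    ∀ Phat : Finset G.E, Phat ⊆ Tstar → G.IsPathBetween Phat a b →
      e ∈ Phat ∧ ∀ e' ∈ Phat, (G.restrict w Q).U e' ≤ (G.restrict w Q).U e := by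
  classical
  intro Phat hPhatsub hPhatpath
  open MSTAux in
  -- basic setup
  have hTsp : G.IsSpanningTree T := by
    obtain ⟨ε₀, hε₀, hlow⟩ := hT.1
    exact (hlow (ε₀/2) (by linarith) (by linarith)).1
  have hTstarsp : G.IsSpanningTree Tstar := (hver w ⟨fun _ _ => rfl, hw⟩).1
  have heT : e ∈ T := hPT heP
  obtain ⟨u, v, hee⟩ := Sym2.exists.mp ⟨G.ends e, rfl⟩
  -- Step 3 : e ∈ Tstar
  have heTstar : e ∈ Tstar := by
    by_contra heTs
    have hsepT : ¬ G.ConnectsVia (T.erase e) u v := tree_sep G hTsp heT hee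
    have hconnstar : G.ConnectsVia Tstar u v := hTstarsp.1 u v
    obtain ⟨R, hRsub, hRconn, hRmin⟩ := exists_minimal_connector G hconnstar
    have hcross : ¬ (∀ g ∈ R, ∀ y z : G.V, G.ends g = s(y, z) →
        G.ConnectsVia (T.erase e) y z) :=
      fun hall => hsepT (conn_transfer G hall hRconn)
    push_neg at hcross
    obtain ⟨h, hhR, y, z, hhe, hsep2⟩ := hcross
    have hhT : h ∈ Tstar := hRsub hhR
    have hhne : h ≠ e := fun heq => heTs (heq ▸ hhT)
    have hLO := lower_exchange G hT heT hhne hhe hsep2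
    have hcutstar : ¬ G.ConnectsVia (Tstar.erase h) u v :=
      minimal_connector_sep G hTstarsp hRsub hRconn hRmin hhR
    have hVC := verify_cut G hw hver hhT (Ne.symm hhne) hee hcutstar
    rw [if_neg heQ] at hVC
    by_cases hhQ : h ∈ Q
    · rw [if_pos hhQ] at hVC
      have hLb : G.L h ≤ w h := valid_lb G (hw h)
      have h4 : G.L e = G.L h := le_antisymm hLO.1 (by linarith)
      obtain ⟨hhnt, _⟩ := hLO.2 h4
      rcases hw h with ⟨htriv, _⟩ | ⟨h1, _⟩
      · exact hhnt htriv
      · linarith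
    · rw [if_neg hhQ] at hVC
      have h4 : G.L e = G.L h := le_antisymm hLO.1 (le_trans (G.LU h) hVC)
      obtain ⟨hhnt, _⟩ := hLO.2 h4
      exact hhnt (le_antisymm (G.LU h) (by linarith))
  -- Step 4 : e ∈ Phat
  have hePhat : e ∈ Phat := by
    by_contra hePh
    have hPhsub' : Phat ⊆ Tstar.erase e := fun g hg =>
      Finset.mem_erase.mpr ⟨fun h => hePh (h ▸ hg), hPhatsub hg⟩
    have hab_star : G.ConnectsVia (Tstar.erase e) a b :=
      conn_mono G hPhsub' (path_conn G hPhatpath)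
    obtain ⟨hdecomp, _⟩ := path_tree_sep G hTsp hPT hP heP hee
    have hsepstar : ¬ G.ConnectsVia (Tstar.erase e) u v := tree_sep G hTstarsp heTstar hee
    set S₀ := (P.erase e) ∪ (Tstar.erase e) with hS₀
    have hm1 : P.erase e ⊆ S₀ := Finset.subset_union_left
    have hm2 : Tstar.erase e ⊆ S₀ := Finset.subset_union_right
    have hconnS0 : G.ConnectsVia S₀ u v := by
      rcases hdecomp with ⟨h5, h6⟩ | ⟨h5, h6⟩
      · exact conn_trans G (conn_symm G (conn_mono G hm1 h5))
          (conn_trans G (conn_mono G hm2 hab_star) (conn_symm G (conn_mono G hm1 h6)))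
      · exact conn_trans G (conn_mono G hm1 h6)
          (conn_trans G (conn_symm G (conn_mono G hm2 hab_star)) (conn_mono G hm1 h5))
    have hcross : ¬ (∀ g ∈ S₀, ∀ y z : G.V, G.ends g = s(y, z) →
        G.ConnectsVia (Tstar.erase e) y z) :=
      fun hall => hsepstar (conn_transfer G hall hconnS0)
    push_neg at hcross
    obtain ⟨y, hyS0, p', q', hye, hysep⟩ := hcross
    have hyP : y ∈ P.erase e := by
      rcases Finset.mem_union.mp hyS0 with h | h
      · exact h
      · exact absurd (conn_single G h hye) hysep
    have hyPP : y ∈ P := Finset.mem_of_mem_erase hyP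
    have hy_ne_e : y ≠ e := Finset.ne_of_mem_erase hyP
    have hVC := verify_cut G hw hver heTstar hy_ne_e hye hysep
    rw [if_neg heQ] at hVC
    have hUyUe : G.U y ≤ G.U e := hmax y hyPP
    -- y is trivial with value U e
    have hytriv : G.L y = G.U y ∧ G.U y = G.U e := by
      by_cases hyQ : y ∈ Q
      · rw [if_pos hyQ] at hVC
        have hub : w y ≤ G.U y := valid_ub G (hw y)
        have h4 : G.U y = G.U e := le_antisymm hUyUe (by linarith)
        rcases hw y with ⟨ht, _⟩ | ⟨_, h2⟩
        · exact ⟨ht, h4⟩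
        · exfalso; linarith
      · rw [if_neg hyQ] at hVC
        have := G.LU y
        exact ⟨le_antisymm this (by linarith), le_antisymm hUyUe (by linarith)⟩
    have hRLy : (if y ∈ Q then w y else G.L y) = G.U e := by
      by_cases hyQ : y ∈ Q
      · rw [if_pos hyQ] at hVC ⊢
        have hub : w y ≤ G.U y := valid_ub G (hw y)
        linarith [hytriv.2]
      · rw [if_neg hyQ]
        rw [hytriv.1, hytriv.2]
    have hyT : y ∈ T := hPT hyPP
    have hyTstar : y ∉ Tstar := fun hmem =>
      hysep (conn_single G (Finset.mem_erase.mpr ⟨hy_ne_e, hmem⟩) hye)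
    have hsepTy : ¬ G.ConnectsVia (T.erase y) p' q' := tree_sep G hTsp hyT hye
    have hconnpq : G.ConnectsVia Tstar p' q' := hTstarsp.1 p' q'
    obtain ⟨R', hR'sub, hR'conn, hR'min⟩ := exists_minimal_connector G hconnpq
    have hcross2 : ¬ (∀ g ∈ R', ∀ c d : G.V, G.ends g = s(c, d) →
        G.ConnectsVia (T.erase y) c d) :=
      fun hall => hsepTy (conn_transfer G hall hR'conn)
    push_neg at hcross2
    obtain ⟨Z, hZR', c, d, hze, hzsep⟩ := hcross2
    have hzTstar : Z ∈ Tstar := hR'sub hZR'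
    have hzy : Z ≠ y := fun h => hyTstar (h ▸ hzTstar)
    have hUP := upper_exchange G hT hyT hzy hze hzsep
    have hLO := lower_exchange G hT hyT hzy hze hzsep
    have hzT : Z ∉ T := fun hmem =>
      hzsep (conn_single G (Finset.mem_erase.mpr ⟨hzy, hmem⟩) hze)
    have hzQ : Z ∈ Q := star_minus_tree_queried G hw hT hver hTsp hTstarsp hzTstar hzT
    have hcutstar2 : ¬ G.ConnectsVia (Tstar.erase Z) p' q' :=
      minimal_connector_sep G hTstarsp hR'sub hR'conn hR'min hZR'
    have hVC2 := verify_cut G hw hver hzTstar (Ne.symm hzy) hye hcutstar2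
    rw [if_pos hzQ, hRLy] at hVC2
    have hUyz : G.U y < G.U Z := lt_of_le_of_ne hUP.1 (fun h => (hUP.2 h).2 hytriv.1)
    rcases hw Z with ⟨hzt, hzv⟩ | ⟨hz1, hz2⟩
    · rw [hzv, hzt] at hVC2
      linarith [hytriv.2]
    · have hLyz := hLO.1
      have : G.L y = G.U e := by rw [hytriv.1, hytriv.2]
      linarith
  refine ⟨hePhat, fun e' he'mem => ?_⟩
  -- Step 5 : highest restricted upper limit
  show (if e' ∈ Q then w e' else G.U e') ≤ (if e ∈ Q then w e else G.U e)
  rw [if_neg heQ]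
  by_cases he'e : e' = e
  · subst he'e
    rw [if_neg heQ]
  · have he'star : e' ∈ Tstar := hPhatsub he'mem
    obtain ⟨u', v', he'ends⟩ := Sym2.exists.mp ⟨G.ends e', rfl⟩
    have hsep := (path_tree_sep G hTstarsp hPhatsub hPhatpath he'mem he'ends).2
    have hconnP : G.ConnectsVia P a b := path_conn G hP
    have hcross : ¬ (∀ g ∈ P, ∀ y z : G.V, G.ends g = s(y, z) →
        G.ConnectsVia (Tstar.erase e') y z) :=
      fun hall => hsep (conn_transfer G hall hconnP)
    push_neg at hcross
    obtain ⟨h', hh'P, y, z, hh'e, hh'sep⟩ := hcross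
    by_cases hh'e' : h' = e'
    · subst hh'e'
      have hUe' : G.U h' ≤ G.U e := hmax h' hh'P
      by_cases he'Q : h' ∈ Q
      · rw [if_pos he'Q]
        have := valid_ub G (hw h')
        linarith
      · rw [if_neg he'Q]
        exact hUe'
    · have hVC := verify_cut G hw hver he'star hh'e' hh'e hh'sep
      have hRLh : (if h' ∈ Q then w h' else G.L h') ≤ G.U h' := by
        by_cases hh'Q : h' ∈ Q
        · rw [if_pos hh'Q]; exact valid_ub G (hw h')
        · rw [if_neg hh'Q]; exact G.LU h'
      have hUh : G.U h' ≤ G.U e := hmax h' hh'P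
      linarith
end
end

section
/- Even restricted to instances of the MST problem under explorable uncertainty with predictions in which exactly one prediction is wrong (k_# = 1, i.e., |{e ∈ E : w_e ≠ ŵ_e}| = 1), every deterministic algorithm has competitive ratio ρ ≥ 2: for every deterministic algorithm there exists such an instance on which it makes at least 2·|OPT| queries. -/
/-!
Common framework: the minimum spanning tree problem under explorable
uncertainty with (untrusted) predictions.
-/

open scoped BigOperators
open scoped Classical

noncomputable section

/-! Auxiliary development for the lower bound: a two-vertex multigraph with two
parallel edges whose uncertainty intervals overlap. -/

/-- The lower-bound instance: vertices `Bool`, two parallel edges `Bool`,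
edge `false` has interval `(0,2)` with prediction `1`,
edge `true` has interval `(1,3)` with prediction `2`. -/
@[reducible] def LBGraph : UncGraph where
  V := Bool
  E := Bool
  fintV := inferInstance
  fintE := inferInstance
  decV := inferInstance
  decE := inferInstance
  ends := fun _ => s(false, true)
  conn := by
    have h1 : Relation.ReflTransGen
        (fun a b : Bool => ∃ _e : Bool, s(false, true) = s(a, b)) false true :=
      Relation.ReflTransGen.single ⟨false, rfl⟩
    have h2 : Relation.ReflTransGen
        (fun a b : Bool => ∃ _e : Bool, s(false, true) = s(a, b)) true false :=
      Relation.ReflTransGen.single ⟨false, Sym2.eq_swap⟩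
    intro u v
    cases u <;> cases v
    · exact .refl
    · exact h1
    · exact h2
    · exact .refl
  L := fun e => if e then 1 else 0
  U := fun e => if e then 3 else 2
  LU := by intro e; cases e <;> norm_num
  pw := fun e => if e then 2 else 1
  pw_mem := by intro e; cases e <;> norm_num

lemma LB_mem_I_false {x : ℝ} : x ∈ LBGraph.I false ↔ 0 < x ∧ x < 2 := by
  simp [UncGraph.I, LBGraph]

lemma LB_mem_I_true {x : ℝ} : x ∈ LBGraph.I true ↔ 1 < x ∧ x < 3 := by
  simp [UncGraph.I, LBGraph]

lemma LB_st_iff (S : Finset LBGraph.E) :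
    LBGraph.IsSpanningTree S ↔ S = {false} ∨ S = {true} := by
  constructor
  · rintro ⟨-, hcard⟩
    have h2 : Fintype.card LBGraph.V = 2 := rfl
    have h1 : S.card = 1 := by omega
    obtain ⟨a, rfl⟩ := Finset.card_eq_one.mp h1
    cases a
    · exact Or.inl rfl
    · exact Or.inr rfl
  · intro h
    have key : ∀ b : Bool, LBGraph.IsSpanningTree {b} := by
      intro b
      constructor
      · have h1 : LBGraph.ConnectsVia {b} false true :=
          Relation.ReflTransGen.single ⟨b, Finset.mem_singleton_self b, rfl⟩
        have h2 : LBGraph.ConnectsVia {b} true false :=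
          Relation.ReflTransGen.single ⟨b, Finset.mem_singleton_self b, Sym2.eq_swap⟩
        intro u v
        cases u <;> cases v
        · exact .refl
        · exact h1
        · exact h2
        · exact .refl
      · rfl
    rcases h with rfl | rfl <;> exact key _

lemma LB_mst_iff (wf : LBGraph.E → ℝ) (T : Finset LBGraph.E) :
    LBGraph.IsMST wf T ↔
      (T = {false} ∧ wf false ≤ wf true) ∨ (T = {true} ∧ wf true ≤ wf false) := by
  constructor
  · rintro ⟨hst, hmin⟩
    rcases (LB_st_iff T).1 hst with rfl | rfl
    · refine Or.inl ⟨rfl, ?_⟩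
      have := hmin {true} ((LB_st_iff _).2 (Or.inr rfl))
      simpa using this
    · refine Or.inr ⟨rfl, ?_⟩
      have := hmin {false} ((LB_st_iff _).2 (Or.inl rfl))
      simpa using this
  · rintro (⟨rfl, h⟩ | ⟨rfl, h⟩) <;>
      refine ⟨(LB_st_iff _).2 (by simp), ?_⟩ <;>
      · intro T' hT'
        rcases (LB_st_iff T').1 hT' with rfl | rfl <;> simpa using h

/-- A compatible weight function for `Q = ∅` is just a valid weight function. -/
lemma LB_not_feasible_empty (w : LBGraph.E → ℝ) : ¬ LBGraph.Feasible w ∅ := by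
  rintro ⟨T, hT⟩
  have c1 : LBGraph.Compatible w ∅ (fun e : Bool => if e then (1.1 : ℝ) else 1.5) := by
    refine ⟨by simp, ?_⟩
    intro e; cases e
    · rw [LB_mem_I_false]; norm_num
    · rw [LB_mem_I_true]; norm_num
  have c2 : LBGraph.Compatible w ∅ (fun e : Bool => if e then (2 : ℝ) else 0.5) := by
    refine ⟨by simp, ?_⟩
    intro e; cases e
    · rw [LB_mem_I_false]; norm_num
    · rw [LB_mem_I_true]; norm_num
  have m1 := (LB_mst_iff _ _).1 (hT _ c1)
  have m2 := (LB_mst_iff _ _).1 (hT _ c2)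
  rcases m1 with ⟨rfl, h⟩ | ⟨rfl, h⟩
  · norm_num at h
  · rcases m2 with ⟨h', -⟩ | ⟨-, h'⟩
    · simp at h'
    · norm_num at h'

/-- True weights for the case where the algorithm queries edge `false` first. -/
noncomputable def wA : LBGraph.E → ℝ := fun e : Bool => if e then 2 else 1.5

/-- True weights for the case where the algorithm queries edge `true` first. -/
noncomputable def wB : LBGraph.E → ℝ := fun e : Bool => if e then 1.5 else 1

lemma LB_valid_wA : LBGraph.Valid wA := by
  intro e; cases e
  · rw [wA, LB_mem_I_false]; norm_num
  · rw [wA, LB_mem_I_true]; norm_num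

lemma LB_valid_wB : LBGraph.Valid wB := by
  intro e; cases e
  · rw [wB, LB_mem_I_false]; norm_num
  · rw [wB, LB_mem_I_true]; norm_num

lemma LB_not_feasible_wA : ¬ LBGraph.Feasible wA {false} := by
  rintro ⟨T, hT⟩
  have c1 : LBGraph.Compatible wA {false} (fun e : Bool => if e then (1.2 : ℝ) else 1.5) := by
    refine ⟨?_, ?_⟩
    · intro e he
      rw [Finset.mem_singleton] at he
      subst he; simp [wA]
    · intro e; cases e
      · rw [LB_mem_I_false]; norm_num
      · rw [LB_mem_I_true]; norm_num
  have c2 : LBGraph.Compatible wA {false} (fun e : Bool => if e then (2.9 : ℝ) else 1.5) := by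
    refine ⟨?_, ?_⟩
    · intro e he
      rw [Finset.mem_singleton] at he
      subst he; simp [wA]
    · intro e; cases e
      · rw [LB_mem_I_false]; norm_num
      · rw [LB_mem_I_true]; norm_num
  have m1 := (LB_mst_iff _ _).1 (hT _ c1)
  have m2 := (LB_mst_iff _ _).1 (hT _ c2)
  rcases m1 with ⟨rfl, h⟩ | ⟨rfl, h⟩
  · norm_num at h
  · rcases m2 with ⟨h', -⟩ | ⟨-, h'⟩
    · simp at h'
    · norm_num at h'

lemma LB_feasible_wA : LBGraph.Feasible wA {true} := by
  refine ⟨{false}, ?_⟩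
  intro wf ⟨hq, hI⟩
  have ht : wf true = 2 := by
    have := hq true (Finset.mem_singleton_self _)
    simpa [wA] using this
  have hf : wf false < 2 := (LB_mem_I_false.1 (hI false)).2
  exact (LB_mst_iff _ _).2 (Or.inl ⟨rfl, by linarith⟩)

lemma LB_not_feasible_wB : ¬ LBGraph.Feasible wB {true} := by
  rintro ⟨T, hT⟩
  have c1 : LBGraph.Compatible wB {true} (fun e : Bool => if e then (1.5 : ℝ) else 1.9) := by
    refine ⟨?_, ?_⟩
    · intro e he
      rw [Finset.mem_singleton] at he
      subst he; simp [wB]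
    · intro e; cases e
      · rw [LB_mem_I_false]; norm_num
      · rw [LB_mem_I_true]; norm_num
  have c2 : LBGraph.Compatible wB {true} (fun e : Bool => if e then (1.5 : ℝ) else 0.5) := by
    refine ⟨?_, ?_⟩
    · intro e he
      rw [Finset.mem_singleton] at he
      subst he; simp [wB]
    · intro e; cases e
      · rw [LB_mem_I_false]; norm_num
      · rw [LB_mem_I_true]; norm_num
  have m1 := (LB_mst_iff _ _).1 (hT _ c1)
  have m2 := (LB_mst_iff _ _).1 (hT _ c2)
  rcases m1 with ⟨rfl, h⟩ | ⟨rfl, h⟩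
  · norm_num at h
  · rcases m2 with ⟨h', -⟩ | ⟨-, h'⟩
    · simp at h'
    · norm_num at h'

lemma LB_feasible_wB : LBGraph.Feasible wB {false} := by
  refine ⟨{false}, ?_⟩
  intro wf ⟨hq, hI⟩
  have hf : wf false = 1 := by
    have := hq false (Finset.mem_singleton_self _)
    simpa [wB] using this
  have ht : 1 < wf true := (LB_mem_I_true.1 (hI true)).1
  exact (LB_mst_iff _ _).2 (Or.inl ⟨rfl, by linarith⟩)

lemma LB_opt_one (w : LBGraph.E → ℝ) (b : Bool) (hf : LBGraph.Feasible w {b}) :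
    LBGraph.optCost w = 1 := by
  have h1 : (1 : ℕ) ∈ {n | ∃ Q, LBGraph.Feasible w Q ∧ Q.card = n} :=
    ⟨{b}, hf, Finset.card_singleton b⟩
  refine le_antisymm (Nat.sInf_le h1) ?_
  rw [Nat.one_le_iff_ne_zero]
  intro h0
  rw [UncGraph.optCost] at h0
  have hmem := Nat.sInf_mem (⟨1, h1⟩ : Set.Nonempty _)
  rw [h0] at hmem
  obtain ⟨Q, hQf, hQc⟩ := hmem
  rw [Finset.card_eq_zero] at hQc
  subst hQc
  exact LB_not_feasible_empty w hQf

lemma LB_run_mem (A : Algorithm) (w : LBGraph.E → ℝ) (e₀ : Bool)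
    (hnext : A.next LBGraph ∅ w = some e₀) :
    ∀ n, A.runQueries LBGraph w n = ∅ ∨ e₀ ∈ A.runQueries LBGraph w n := by
  intro n
  induction n with
  | zero => exact Or.inl rfl
  | succ n ih =>
    rw [Algorithm.runQueries]
    by_cases hf : LBGraph.Feasible w (A.runQueries LBGraph w n)
    · simpa [hf] using ih
    · simp only [hf, if_false]
      rcases ih with h | h
      · rw [h, hnext]
        exact Or.inr (Finset.mem_insert_self _ _)
      · cases hn : A.next LBGraph (A.runQueries LBGraph w n) w
        · exact Or.inr h
        · exact Or.inr (Finset.mem_insert_of_mem h)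

lemma LB_run_empty (A : Algorithm) (w : LBGraph.E → ℝ)
    (hnext : A.next LBGraph ∅ w = none) :
    ∀ n, A.runQueries LBGraph w n = ∅ := by
  intro n
  induction n with
  | zero => rfl
  | succ n ih =>
    rw [Algorithm.runQueries]
    by_cases hf : LBGraph.Feasible w (A.runQueries LBGraph w n)
    · simpa [hf] using ih
    · simp [ih, hnext]

lemma LB_main (A : Algorithm) (hA : A.Solves) (e₀ : Bool)
    (hnw : A.next LBGraph ∅ LBGraph.pw = some e₀)
    (w : LBGraph.E → ℝ) (hvalid : LBGraph.Valid w)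
    (hnotfeas : ¬ LBGraph.Feasible w {e₀})
    (b : Bool) (hb : LBGraph.Feasible w {b}) :
    2 * (LBGraph.optCost w : ℝ) ≤ (A.algCost LBGraph w : ℝ) := by
  have hopt := LB_opt_one w b hb
  have hnw' : A.next LBGraph ∅ w = some e₀ := by
    rw [A.lawful LBGraph ∅ w LBGraph.pw (by simp)]; exact hnw
  have hfinfeas : LBGraph.Feasible w (A.finalQueries LBGraph w) := hA LBGraph w hvalid
  have hmem : e₀ ∈ A.finalQueries LBGraph w := by
    rcases LB_run_mem A w e₀ hnw' (Fintype.card LBGraph.E + 1) with h | h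
    · exfalso
      rw [Algorithm.finalQueries, h] at hfinfeas
      exact LB_not_feasible_empty w hfinfeas
    · exact h
  have hcard2 : 2 ≤ (A.finalQueries LBGraph w).card := by
    by_contra hlt
    push_neg at hlt
    have h01 : (A.finalQueries LBGraph w).card = 0 ∨
        (A.finalQueries LBGraph w).card = 1 := by omega
    rcases h01 with hc | hc
    · rw [Finset.card_eq_zero] at hc
      rw [hc] at hmem
      exact absurd hmem (Finset.notMem_empty _)
    · obtain ⟨a, ha⟩ := Finset.card_eq_one.mp hc
      rw [ha] at hmem
      rw [Finset.mem_singleton] at hmem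
      subst hmem
      rw [ha] at hfinfeas
      exact hnotfeas hfinfeas
  rw [hopt]
  have h2 : (2 : ℝ) ≤ (A.algCost LBGraph w : ℝ) := by exact_mod_cast hcard2
  push_cast
  linarith

/-- even restricted to instances with exactly one inaccurate
prediction (`k_# = 1`), every deterministic algorithm has competitive ratio at
least `2`: there is such an instance on which it makes at least `2·|OPT|`
queries. -/
theorem lower_bound_single_wrong_prediction :
    ∀ A : Algorithm, A.Solves →
      ∃ (G : UncGraph) (w : G.E → ℝ), G.Valid w ∧
        {e : G.E | w e ≠ G.pw e}.ncard = 1 ∧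
        2 * (G.optCost w : ℝ) ≤ (A.algCost G w : ℝ) := by
  intro A hA
  cases hnext : A.next LBGraph ∅ LBGraph.pw with
  | none =>
    -- the algorithm never queries anything, contradicting `Solves` on `wA`
    exfalso
    have hnA : A.next LBGraph ∅ wA = none := by
      rw [A.lawful LBGraph ∅ wA LBGraph.pw (by simp)]; exact hnext
    have hfin : A.finalQueries LBGraph wA = ∅ := LB_run_empty A wA hnA _
    have := hA LBGraph wA LB_valid_wA
    rw [hfin] at this
    exact LB_not_feasible_empty wA this
  | some e₀ =>
    cases e₀ with
    | false =>
      refine ⟨LBGraph, wA, LB_valid_wA, ?_,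
        LB_main A hA false hnext wA LB_valid_wA LB_not_feasible_wA true LB_feasible_wA⟩
      have hset : {e : LBGraph.E | wA e ≠ LBGraph.pw e} = {false} := by
        ext e
        cases e <;> simp [wA, LBGraph] <;> norm_num
      rw [hset, Set.ncard_singleton]
    | true =>
      refine ⟨LBGraph, wB, LB_valid_wB, ?_,
        LB_main A hA true hnext wB LB_valid_wB LB_not_feasible_wB false LB_feasible_wB⟩
      have hset : {e : LBGraph.E | wB e ≠ LBGraph.pw e} = {true} := by
        ext e
        cases e <;> simp [wB, LBGraph] <;> norm_num
      rw [hset, Set.ncard_singleton]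
end
end
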